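/- arXiv:1603.06228 — 6 statements merged into one kernel-verified Lean document; each statement's English description precedes it below -/
import Mathlib

section
/- If K is a field with more than 2 elements, V a finite-dimensional K-vector space, and f : V → V a nilpotent endomorphism, then every characteristic subspace of V (invariant under all automorphisms commuting with f) is hyperinvariant (invariant under all endomorphisms commuting with f). -/
open LinearMap

variable {K : Type*} [Field K] {V : Type*} [AddCommGroup V] [Module K V]

/-- `X` is hyperinvariant for `f`: invariant under every endomorphism commuting with `f`. -/
def Hinv (f : V →ₗ[K] V) (X : Submodule K V) : Prop :=
  ∀ g : V →ₗ[K] V, g ∘ₗ f = f ∘ₗ g → X.map g ≤ X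

/-- `X` is characteristic for `f`: `f`-invariant and fixed by every automorphism commuting with `f`. -/
def Chinv (f : V →ₗ[K] V) (X : Submodule K V) : Prop :=
  X.map f ≤ X ∧
    ∀ α : V ≃ₗ[K] V, (α : V →ₗ[K] V) ∘ₗ f = f ∘ₗ (α : V →ₗ[K] V) →
      X.map (α : V →ₗ[K] V) = X

/-- The cyclic subspace generated by `x`. -/
def cyc (f : V →ₗ[K] V) (x : V) : Submodule K V :=
  Submodule.span K (Set.range fun i : ℕ => (f ^ i) x)

/-- `x` has exponent `ℓ`. -/
def ExpEq (f : V →ₗ[K] V) (x : V) (ℓ : ℕ) : Prop :=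
  (f ^ ℓ) x = 0 ∧ ∀ j < ℓ, (f ^ j) x ≠ 0

/-- `x` has height `q`. -/
def HeightEq (f : V →ₗ[K] V) (x : V) (q : ℕ) : Prop :=
  x ∈ LinearMap.range (f ^ q) ∧ x ∉ LinearMap.range (f ^ (q + 1))

/-- The `r`-th Ulm invariant: number of Jordan blocks of size `r` (for `r ≥ 1`). -/
noncomputable def ulm (f : V →ₗ[K] V) (r : ℕ) : ℕ :=
  Module.finrank K ↥(LinearMap.ker f ⊓ LinearMap.range (f ^ (r - 1))) -
    Module.finrank K ↥(LinearMap.ker f ⊓ LinearMap.range (f ^ r))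

/-- `u` is a generator tuple with exponents `t`. -/
def IsGenTuple {k : ℕ} (f : V →ₗ[K] V) (u : Fin k → V) (t : Fin k → ℕ) : Prop :=
  (∀ i, ExpEq f (u i) (t i)) ∧ DirectSum.IsInternal (fun i => cyc f (u i))

/-- The summand `⟨U_a⟩` of all cyclic subspaces whose generator has exponent `a`. -/
def subU {k : ℕ} (f : V →ₗ[K] V) (u : Fin k → V) (t : Fin k → ℕ) (a : ℕ) : Submodule K V :=
  ⨆ i ∈ {i : Fin k | t i = a}, cyc f (u i)

theorem stmt0 [FiniteDimensional K V] (f : V →ₗ[K] V) (hf : IsNilpotent f)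
    (hK : 2 < Cardinal.mk K) (X : Submodule K V) (hX : Chinv f X) : Hinv f X := by
  classical
  intro g hg
  -- pick a scalar `d` with `d ≠ 0`, `d ≠ 1`
  obtain ⟨d, hd0, hd1⟩ : ∃ d : K, d ≠ 0 ∧ d ≠ 1 := by
    by_contra h
    push_neg at h
    have hinj : Function.Injective (fun a : K => (ULift.up (decide (a = 0)) : ULift Bool)) := by
      intro a b hab
      simp only [ULift.up_inj, decide_eq_decide] at hab
      by_cases ha : a = 0
      · rw [ha, hab.mp ha]
      · have hb : b ≠ 0 := fun hb => ha (hab.mpr hb)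
        rw [h a ha, h b hb]
    have hle : Cardinal.mk K ≤ Cardinal.mk (ULift Bool) := Cardinal.mk_le_of_injective hinj
    rw [Cardinal.mk_fintype (ULift Bool)] at hle
    simp only [Fintype.card_ulift, Fintype.card_bool, Nat.cast_ofNat] at hle
    exact (not_le.mpr hK) hle
  have h1d : (1 : K) - d ≠ 0 := sub_ne_zero.mpr (Ne.symm hd1)
  -- commuting as ring elements
  have hfg : Commute f g := by
    unfold Commute SemiconjBy
    rw [Module.End.mul_eq_comp, Module.End.mul_eq_comp]
    exact hg.symm
  -- Fitting decomposition of `g`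
  obtain ⟨n, hn⟩ := Filter.eventually_atTop.mp
    ((g.eventually_isCompl_ker_pow_range_pow).and (Filter.eventually_ge_atTop 1))
  obtain ⟨hcompl, hn1⟩ := hn n le_rfl
  set p := LinearMap.ker (g ^ n) with hp
  set q := LinearMap.range (g ^ n) with hq
  set π : Module.End K V := p.subtype ∘ₗ p.projectionOnto q hcompl with hπdef
  have hπp : ∀ v : V, π v ∈ p := fun v => (p.projectionOnto q hcompl v).2
  have hπ_left : ∀ v ∈ p, π v = v := by
    intro v hv
    show ((p.projectionOnto q hcompl) v : V) = v
    rw [show v = ((⟨v, hv⟩ : p) : V) from rfl, Submodule.projectionOnto_apply_left hcompl]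
  have hπ_right : ∀ v ∈ q, π v = 0 := by
    intro v hv
    show ((p.projectionOnto q hcompl) v : V) = 0
    rw [Submodule.projectionOnto_apply_of_mem_right hcompl hv]
    rfl
  have hsub : ∀ v : V, v - π v ∈ q := by
    intro v
    have h := Submodule.projection_add_projection_eq_self hcompl v
    have hvv : v - π v = ((q.projectionOnto p hcompl.symm) v : V) := by
      have hπv : π v = ((p.projectionOnto q hcompl) v : V) := rfl
      rw [hπv, eq_comm, eq_sub_iff_add_eq, add_comm]
      exact h
    rw [hvv]
    exact ((q.projectionOnto p hcompl.symm) v).2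
  -- invariance of `p` and `q` under `f` and `g`
  have hcomm_pows : ∀ (h : Module.End K V), Commute g h → ∀ m : ℕ, ∀ v : V,
      (g ^ m) (h v) = h ((g ^ m) v) := by
    intro h hc m v
    have heq := ((hc.symm.pow_right m).eq).symm
    calc (g ^ m) (h v) = ((g ^ m) * h) v := rfl
      _ = (h * (g ^ m)) v := by rw [heq]
      _ = h ((g ^ m) v) := rfl
  have hfp : ∀ v ∈ p, f v ∈ p := by
    intro v hv
    have : (g ^ n) (f v) = f ((g ^ n) v) := hcomm_pows f hfg.symm n v
    rw [LinearMap.mem_ker] at hv ⊢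
    rw [this, hv, map_zero]
  have hfq : ∀ v ∈ q, f v ∈ q := by
    rintro v ⟨w, rfl⟩
    exact ⟨f w, hcomm_pows f hfg.symm n w⟩
  have hgp : ∀ v ∈ p, g v ∈ p := by
    intro v hv
    have : (g ^ n) (g v) = g ((g ^ n) v) := hcomm_pows g (Commute.refl g) n v
    rw [LinearMap.mem_ker] at hv ⊢
    rw [this, hv, map_zero]
  have hgq : ∀ v ∈ q, g v ∈ q := by
    rintro v ⟨w, rfl⟩
    exact ⟨g w, hcomm_pows g (Commute.refl g) n w⟩
  -- π commutes with f and with g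
  have hcommπ : ∀ (h : Module.End K V), (∀ v ∈ p, h v ∈ p) → (∀ v ∈ q, h v ∈ q) →
      Commute h π := by
    intro h hhp hhq
    unfold Commute SemiconjBy
    ext v
    show h (π v) = π (h v)
    have hdec : h v = h (π v) + h (v - π v) := by rw [← map_add]; congr 1; abel
    rw [hdec, map_add, hπ_left _ (hhp _ (hπp v)), hπ_right _ (hhq _ (hsub v)), add_zero]
  have hfπ : Commute f π := hcommπ f hfp hfq
  have hgπ : Commute g π := hcommπ g hgp hgq
  -- the two automorphisms
  set w : Module.End K V := g * (1 - π) with hwdef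
  set α : Module.End K V := g * π + d • w - π with hα
  set β : Module.End K V := π + (1 - d) • w with hβ
  have hαβ : α + β = g := by
    rw [hα, hβ, hwdef]
    have key : d • (g * (1 - π)) + (1 - d) • (g * (1 - π)) = g * (1 - π) := by
      rw [← add_smul]
      simp
    calc g * π + d • (g * (1 - π)) - π + (π + (1 - d) • (g * (1 - π)))
        = g * π + (d • (g * (1 - π)) + (1 - d) • (g * (1 - π))) := by abel
      _ = g * π + g * (1 - π) := by rw [key]
      _ = g := by rw [mul_sub, mul_one]; abel
  -- commuting with f
  have hfw : Commute f w := hfg.mul_right ((Commute.one_right f).sub_right hfπ)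
  have hfα : Commute f α := ((hfg.mul_right hfπ).add_right (hfw.smul_right d)).sub_right hfπ
  have hfβ : Commute f β := hfπ.add_right (hfw.smul_right (1 - d))
  -- pointwise expansions
  have hαv : ∀ v : V, α v = (g (π v) - π v) + d • g (v - π v) := by
    intro v
    have h0 : α v = g (π v) + d • g (v - π v) - π v := rfl
    rw [h0]
    abel
  have hβv : ∀ v : V, β v = π v + (1 - d) • g (v - π v) := fun v => rfl
  -- zero decompositions
  have hdisj : ∀ a b : V, a ∈ p → b ∈ q → a + b = 0 → a = 0 ∧ b = 0 := by
    intro a b ha hb hab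
    have hba : a = -b := eq_neg_of_add_eq_zero_left hab
    have ha' : a ∈ q := hba ▸ q.neg_mem hb
    have h0 : a = 0 := (Submodule.disjoint_def.mp hcompl.disjoint) a ha ha'
    exact ⟨h0, by rw [h0, zero_add] at hab; exact hab⟩
  -- kernel elements in p on which g acts as identity are zero
  have hker_p : ∀ a : V, a ∈ p → g a = a → a = 0 := by
    intro a ha hga
    have hpow : ∀ m : ℕ, (g ^ m) a = a := by
      intro m
      induction m with
      | zero => simp
      | succ m ih => rw [pow_succ, Module.End.mul_apply, hga, ih]
    rw [LinearMap.mem_ker] at ha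
    rw [hpow n] at ha
    exact ha
  -- elements of q killed by g are zero
  have hker_q : ∀ b : V, b ∈ q → g b = 0 → b = 0 := by
    intro b hb hgb
    obtain ⟨m, rfl⟩ : ∃ m, n = m + 1 := ⟨n - 1, by omega⟩
    have hbp : b ∈ p := by
      rw [LinearMap.mem_ker, pow_succ, Module.End.mul_apply, hgb, map_zero]
    exact (Submodule.disjoint_def.mp hcompl.disjoint) b hbp hb
  -- α is injective
  have hαinj : Function.Injective α := by
    rw [← LinearMap.ker_eq_bot]
    apply LinearMap.ker_eq_bot'.mpr
    intro v hv
    rw [hαv v] at hv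
    have h1 : g (π v) - π v ∈ p := p.sub_mem (hgp _ (hπp v)) (hπp v)
    have h2 : d • g (v - π v) ∈ q := q.smul_mem d (hgq _ (hsub v))
    obtain ⟨e1, e2⟩ := hdisj _ _ h1 h2 hv
    have ha0 : π v = 0 := hker_p (π v) (hπp v) (sub_eq_zero.mp e1)
    have hb0 : v - π v = 0 := by
      apply hker_q _ (hsub v)
      exact (smul_eq_zero.mp e2).resolve_left hd0
    have hv0 : v = π v + (v - π v) := by abel
    rw [hv0, hb0, ha0, add_zero]
  have hβinj : Function.Injective β := by
    rw [← LinearMap.ker_eq_bot]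
    apply LinearMap.ker_eq_bot'.mpr
    intro v hv
    rw [hβv v] at hv
    have h2 : (1 - d) • g (v - π v) ∈ q := q.smul_mem _ (hgq _ (hsub v))
    obtain ⟨e1, e2⟩ := hdisj _ _ (hπp v) h2 hv
    have hb0 : v - π v = 0 := by
      apply hker_q _ (hsub v)
      exact (smul_eq_zero.mp e2).resolve_left h1d
    have hv0 : v = π v + (v - π v) := by abel
    rw [hv0, hb0, e1, add_zero]
  -- upgrade to linear equivalences
  have hαbij : Function.Bijective α := ⟨hαinj, LinearMap.injective_iff_surjective.mp hαinj⟩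
  have hβbij : Function.Bijective β := ⟨hβinj, LinearMap.injective_iff_surjective.mp hβinj⟩
  set A : V ≃ₗ[K] V := LinearEquiv.ofBijective α hαbij with hA
  set B : V ≃ₗ[K] V := LinearEquiv.ofBijective β hβbij with hB
  have hAcoe : (A : V →ₗ[K] V) = α := rfl
  have hBcoe : (B : V →ₗ[K] V) = β := rfl
  have hAcomm : (A : V →ₗ[K] V) ∘ₗ f = f ∘ₗ (A : V →ₗ[K] V) := by
    rw [hAcoe, ← Module.End.mul_eq_comp, ← Module.End.mul_eq_comp]
    exact hfα.eq.symm
  have hBcomm : (B : V →ₗ[K] V) ∘ₗ f = f ∘ₗ (B : V →ₗ[K] V) := by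
    rw [hBcoe, ← Module.End.mul_eq_comp, ← Module.End.mul_eq_comp]
    exact hfβ.eq.symm
  have hXA : X.map (A : V →ₗ[K] V) = X := hX.2 A hAcomm
  have hXB : X.map (B : V →ₗ[K] V) = X := hX.2 B hBcomm
  -- conclude
  rintro _ ⟨x, hx, rfl⟩
  have hgx : g x = α x + β x := by
    rw [← hαβ]; rfl
  rw [hgx]
  have hαx : α x ∈ X := by
    rw [← hXA]
    exact Submodule.mem_map_of_mem hx
  have hβx : β x ∈ X := by
    rw [← hXB]
    exact Submodule.mem_map_of_mem hx
  exact X.add_mem hαx hβx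
end

section
/- Let K = GF(2), V = K^4, f the nilpotent endomorphism given on the standard basis by f(e1) = 0, f(e2) = e3, f(e3) = e4, f(e4) = 0, and z = e1 + e3. Then X = span{z, fz} is a characteristic subspace of V for f but is not hyperinvariant. -/
open LinearMap

variable {K : Type*} [Field K] {V : Type*} [AddCommGroup V] [Module K V]

/-- The matrix of `f` : `f e₁ = 0`, `f e₂ = e₃`, `f e₃ = e₄`, `f e₄ = 0`. -/
def Mex : Matrix (Fin 4) (Fin 4) (ZMod 2) := !![0,0,0,0; 0,0,0,0; 0,1,0,0; 0,0,1,0]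

noncomputable def fex : (Fin 4 → ZMod 2) →ₗ[ZMod 2] (Fin 4 → ZMod 2) := Matrix.toLin' Mex

/-- `z = e₁ + e₃`. -/
def zex : Fin 4 → ZMod 2 := ![1, 0, 1, 0]


private lemma fapp (v : Fin 4 → ZMod 2) : fex v = ![0, 0, v 1, v 2] := by
  funext i
  fin_cases i <;>
  simp [fex, Matrix.toLin'_apply, Matrix.mulVec, dotProduct, Fin.sum_univ_four, Mex,
    Matrix.vecHead, Matrix.vecTail]

private lemma mem_X (v : Fin 4 → ZMod 2) :
    v ∈ Submodule.span (ZMod 2) {zex, fex zex} ↔ v 1 = 0 ∧ v 2 = v 0 := by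
  rw [Submodule.mem_span_pair]
  constructor
  · rintro ⟨a, b, rfl⟩
    simp [fapp, zex]
  · rintro ⟨h1, h2⟩
    refine ⟨v 0, v 3, ?_⟩
    funext i
    fin_cases i <;> simp [fapp, zex, h1, h2]

private lemma alpha_z_mem (α : (Fin 4 → ZMod 2) ≃ₗ[ZMod 2] (Fin 4 → ZMod 2))
    (hα : (α : _ →ₗ[ZMod 2] _) ∘ₗ fex = fex ∘ₗ (α : _ →ₗ[ZMod 2] _)) :
    α zex ∈ Submodule.span (ZMod 2) {zex, fex zex} := by
  have h1 : ∀ v, α (fex v) = fex (α v) := fun v => LinearMap.congr_fun hα v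
  have h2 : ∀ v, α.symm (fex v) = fex (α.symm v) := by
    intro v
    apply α.injective
    rw [h1, α.apply_symm_apply, α.apply_symm_apply]
  set w := α zex with hw
  have hffz : fex (fex zex) = 0 := by
    rw [fapp zex, fapp]; funext i; fin_cases i <;> simp [zex]
  have hw1 : w 1 = 0 := by
    have : fex (fex w) = 0 := by
      rw [hw, ← h1, ← h1, hffz, map_zero]
    have := congr_fun this 3
    rw [fapp w, fapp] at this
    simpa using this
  rw [mem_X]
  refine ⟨hw1, ?_⟩
  by_contra hne
  have hcases : (w 0 = 0 ∧ w 2 = 1) ∨ (w 0 = 1 ∧ w 2 = 0) := by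
    revert hne; generalize w 0 = a; generalize w 2 = b; revert a b; decide
  rcases hcases with ⟨h0, h2'⟩ | ⟨h0, h2'⟩
  · have hy : fex ![0, 1, w 3, 0] = w := by
      rw [fapp]; funext i; fin_cases i <;> simp [h0, hw1, h2']
    have hz : zex = fex (α.symm ![0, 1, w 3, 0]) := by
      rw [← h2, hy, hw, α.symm_apply_apply]
    have := congr_fun hz 0
    rw [fapp] at this
    simp [zex] at this
  · have hfw : fex w = 0 := by
      rw [fapp]; funext i; fin_cases i <;> simp [hw1, h2']
    have : fex zex = 0 := by
      apply α.injective
      rw [h1, ← hw, hfw, map_zero]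
    have := congr_fun this 3
    rw [fapp] at this
    simp [zex] at this

private lemma fX_le : (Submodule.span (ZMod 2) {zex, fex zex}).map fex
    ≤ Submodule.span (ZMod 2) {zex, fex zex} := by
  rw [Submodule.map_span_le]
  rintro m (rfl | rfl)
  · exact Submodule.subset_span (Or.inr rfl)
  · rw [mem_X, fapp, fapp]; simp [zex]

private lemma alpha_le (α : (Fin 4 → ZMod 2) ≃ₗ[ZMod 2] (Fin 4 → ZMod 2))
    (hα : (α : _ →ₗ[ZMod 2] _) ∘ₗ fex = fex ∘ₗ (α : _ →ₗ[ZMod 2] _)) :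
    (Submodule.span (ZMod 2) {zex, fex zex}).map (α : _ →ₗ[ZMod 2] _)
    ≤ Submodule.span (ZMod 2) {zex, fex zex} := by
  rw [Submodule.map_span_le]
  rintro m (rfl | rfl)
  · exact alpha_z_mem α hα
  · have h1 : α (fex zex) = fex (α zex) := LinearMap.congr_fun hα zex
    show α (fex zex) ∈ _
    rw [h1]
    exact fX_le ⟨α zex, alpha_z_mem α hα, rfl⟩

private def gexM : Matrix (Fin 4) (Fin 4) (ZMod 2) := !![1,0,0,0; 0,0,0,0; 0,0,0,0; 0,0,0,0]

private noncomputable def gex : (Fin 4 → ZMod 2) →ₗ[ZMod 2] (Fin 4 → ZMod 2) :=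
  Matrix.toLin' gexM

theorem stmt1 :
    Chinv fex (Submodule.span (ZMod 2) {zex, fex zex}) ∧
      ¬ Hinv fex (Submodule.span (ZMod 2) {zex, fex zex}) := by
  constructor
  · refine ⟨fX_le, ?_⟩
    intro α hα
    refine le_antisymm (alpha_le α hα) ?_
    have hα' : (α.symm : _ →ₗ[ZMod 2] _) ∘ₗ fex = fex ∘ₗ (α.symm : _ →ₗ[ZMod 2] _) := by
      refine LinearMap.ext fun v => ?_
      have h1 : ∀ u, α (fex u) = fex (α u) := fun u => LinearMap.congr_fun hα u
      simp only [LinearMap.comp_apply, LinearEquiv.coe_coe]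
      apply α.injective
      rw [h1, α.apply_symm_apply, α.apply_symm_apply]
    intro x hx
    exact ⟨α.symm x, alpha_le α.symm hα' ⟨x, hx, rfl⟩, α.apply_symm_apply x⟩
  · intro h
    have hcomm : gex ∘ₗ fex = fex ∘ₗ gex := by
      rw [gex, fex, ← Matrix.toLin'_mul, ← Matrix.toLin'_mul]
      congr 1
      decide
    have hz : zex ∈ Submodule.span (ZMod 2) {zex, fex zex} :=
      Submodule.subset_span (Or.inl rfl)
    have := h gex hcomm ⟨zex, hz, rfl⟩
    rw [mem_X] at this
    have hg : gex zex = ![1,0,0,0] := by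
      funext i
      fin_cases i <;>
      simp [gex, gexM, Matrix.toLin'_apply, Matrix.mulVec, dotProduct, Fin.sum_univ_four,
        zex, Matrix.vecHead, Matrix.vecTail]
    rw [hg] at this
    simp at this
end

section
/- Let f be a nilpotent endomorphism of a finite-dimensional vector space V, and let U = (u_1, …, u_k) be a generator tuple, i.e., V is the direct sum of the cyclic subspaces ⟨u_i⟩ with exponents e(u_1) ≤ ⋯ ≤ e(u_k). Then the map sending an automorphism α commuting with f to the tuple (α(u_1), …, α(u_k)) is a bijection from Aut_f(V) onto the set of generator tuples of V with the same exponent sequence. -/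
open LinearMap

variable {K : Type*} [Field K] {V : Type*} [AddCommGroup V] [Module K V]

lemma comm_pow_apply {f g : V →ₗ[K] V} (h : g ∘ₗ f = f ∘ₗ g) (n : ℕ) (x : V) :
    (f ^ n) (g x) = g ((f ^ n) x) := by
  induction n generalizing x with
  | zero => simp
  | succ n ih =>
    have hfg : f (g x) = g (f x) := (LinearMap.ext_iff.mp h x).symm
    rw [pow_succ, Module.End.mul_apply, Module.End.mul_apply, hfg, ih (f x)]

lemma pow_apply_eq_zero {f : V →ₗ[K] V} {x : V} {ℓ : ℕ} (hx : (f ^ ℓ) x = 0)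
    {n : ℕ} (hn : ℓ ≤ n) : (f ^ n) x = 0 := by
  obtain ⟨m, rfl⟩ := Nat.exists_eq_add_of_le hn
  rw [show ℓ + m = m + ℓ from add_comm _ _, pow_add, Module.End.mul_apply, hx, map_zero]

lemma cyc_indep {f : V →ₗ[K] V} {x : V} {ℓ : ℕ} (hx : ExpEq f x ℓ) :
    LinearIndependent K (fun j : Fin ℓ => (f ^ (j : ℕ)) x) := by
  classical
  rw [Fintype.linearIndependent_iff]
  intro c hc
  by_contra hne
  push_neg at hne
  obtain ⟨j0, hj0⟩ := hne
  set s : Finset (Fin ℓ) := Finset.univ.filter (fun j => c j ≠ 0) with hs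
  have hsne : s.Nonempty := ⟨j0, by simp [hs, hj0]⟩
  set m := s.min' hsne with hm
  have hms : m ∈ s := s.min'_mem hsne
  have hcm : c m ≠ 0 := by simpa [hs] using hms
  have key := congrArg (f ^ (ℓ - 1 - (m : ℕ))) hc
  rw [map_sum, map_zero] at key
  have hterm : ∀ j : Fin ℓ,
      (f ^ (ℓ - 1 - (m : ℕ))) (c j • (f ^ (j : ℕ)) x)
        = c j • (f ^ (ℓ - 1 - (m : ℕ) + (j : ℕ))) x := by
    intro j
    rw [map_smul, pow_add, Module.End.mul_apply]
  rw [Finset.sum_congr rfl (fun j _ => hterm j)] at key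
  have hsum : ∑ j : Fin ℓ, c j • (f ^ (ℓ - 1 - (m : ℕ) + (j : ℕ))) x
      = c m • (f ^ (ℓ - 1 - (m : ℕ) + (m : ℕ))) x := by
    apply Finset.sum_eq_single_of_mem m (Finset.mem_univ _)
    intro j _ hjm
    by_cases hcj : c j = 0
    · simp [hcj]
    · have hjs : j ∈ s := by simp [hs, hcj]
      have hmj : (m : ℕ) < (j : ℕ) := by
        rcases (s.min'_le j hjs).lt_or_eq with h | h
        · exact h
        · exact absurd h.symm hjm
      have hge : ℓ ≤ ℓ - 1 - (m : ℕ) + (j : ℕ) := by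
        have := m.isLt
        omega
      rw [pow_apply_eq_zero hx.1 hge, smul_zero]
  rw [hsum] at key
  have hl1 : ℓ - 1 - (m : ℕ) + (m : ℕ) = ℓ - 1 := by have := m.isLt; omega
  rw [hl1] at key
  have : (f ^ (ℓ - 1)) x ≠ 0 := hx.2 _ (by have := m.isLt; omega)
  rcases smul_eq_zero.mp key with h | h
  · exact hcm h
  · exact this h

lemma cyc_eq_span {f : V →ₗ[K] V} {x : V} {ℓ : ℕ} (hx : ExpEq f x ℓ) :
    cyc f x = Submodule.span K (Set.range fun j : Fin ℓ => (f ^ (j : ℕ)) x) := by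
  apply le_antisymm
  · rw [cyc, Submodule.span_le]
    rintro _ ⟨i, rfl⟩
    show (f ^ i) x ∈ _
    by_cases hi : i < ℓ
    · exact Submodule.subset_span ⟨⟨i, hi⟩, rfl⟩
    · rw [pow_apply_eq_zero hx.1 (le_of_not_gt hi)]
      exact Submodule.zero_mem _
  · rw [Submodule.span_le]
    rintro _ ⟨j, rfl⟩
    exact Submodule.subset_span ⟨(j : ℕ), rfl⟩

noncomputable def cycBasis {f : V →ₗ[K] V} {x : V} {ℓ : ℕ} (hx : ExpEq f x ℓ) :
    Module.Basis (Fin ℓ) K (cyc f x) :=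
  (Module.Basis.span (cyc_indep hx)).map (LinearEquiv.ofEq _ _ (cyc_eq_span hx).symm)

lemma cycBasis_coe {f : V →ₗ[K] V} {x : V} {ℓ : ℕ} (hx : ExpEq f x ℓ) (j : Fin ℓ) :
    (cycBasis hx j : V) = (f ^ (j : ℕ)) x := by
  simp [cycBasis, Module.Basis.span_apply]

lemma comm_pow_apply' {f : V →ₗ[K] V} {α : V ≃ₗ[K] V}
    (hα : (α : V →ₗ[K] V) ∘ₗ f = f ∘ₗ (α : V →ₗ[K] V)) (n : ℕ) (x : V) :
    (f ^ n) (α x) = α ((f ^ n) x) :=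
  comm_pow_apply hα n x

lemma cyc_map {f : V →ₗ[K] V} {α : V ≃ₗ[K] V}
    (hα : (α : V →ₗ[K] V) ∘ₗ f = f ∘ₗ (α : V →ₗ[K] V)) (x : V) :
    cyc f (α x) = (cyc f x).map (α : V →ₗ[K] V) := by
  rw [cyc, cyc, Submodule.map_span, ← Set.range_comp]
  refine congrArg _ (congrArg Set.range ?_)
  funext i
  show (f ^ i) (α x) = α ((f ^ i) x)
  exact comm_pow_apply' hα i x

theorem stmt2 [FiniteDimensional K V] (f : V →ₗ[K] V) (hf : IsNilpotent f)
    {k : ℕ} (u : Fin k → V) (t : Fin k → ℕ) (ht : Monotone t) (hu : IsGenTuple f u t) :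
    Set.BijOn (fun (α : V ≃ₗ[K] V) => fun i => α (u i))
      {α : V ≃ₗ[K] V | (α : V →ₗ[K] V) ∘ₗ f = f ∘ₗ (α : V →ₗ[K] V)}
      {v : Fin k → V | IsGenTuple f v t} := by
  classical
  set Bu := hu.2.collectedBasis (fun i => cycBasis (hu.1 i)) with hBudef
  have hBu : ∀ p : Σ i, Fin (t i), (Bu p : V) = (f ^ (p.2 : ℕ)) (u p.1) := by
    intro p
    rw [hBudef, DirectSum.IsInternal.collectedBasis_coe]
    exact cycBasis_coe _ _
  refine ⟨?_, ?_, ?_⟩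
  · -- MapsTo
    intro α hα
    simp only [Set.mem_setOf_eq] at hα ⊢
    constructor
    · intro i
      refine ⟨?_, ?_⟩
      · show (f ^ t i) (α (u i)) = 0
        rw [comm_pow_apply' hα, (hu.1 i).1, map_zero]
      · intro j hj h0
        have h0' : (f ^ j) (α (u i)) = 0 := h0
        rw [comm_pow_apply' hα] at h0'
        exact (hu.1 i).2 j hj (by simpa using h0')
    · show DirectSum.IsInternal (fun i => cyc f (α (u i)))
      have hrw : (fun i => cyc f (α (u i)))
          = fun i => Submodule.orderIsoMapComap (α : V ≃ₗ[K] V) (cyc f (u i)) := by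
        funext i
        rw [cyc_map hα]
        rfl
      rw [DirectSum.isInternal_submodule_iff_iSupIndep_and_iSup_eq_top]
      obtain ⟨hind, hsup⟩ :=
        (DirectSum.isInternal_submodule_iff_iSupIndep_and_iSup_eq_top _).mp hu.2
      constructor
      · rw [hrw]
        exact (iSupIndep_map_orderIso_iff _).mpr hind
      · rw [hrw, ← OrderIso.map_iSup, hsup]
        exact map_top _
  · -- InjOn
    intro α hα β hβ hEq
    simp only [Set.mem_setOf_eq] at hα hβ
    have hEq' : ∀ i, α (u i) = β (u i) := fun i => congrFun hEq i
    apply LinearEquiv.toLinearMap_injective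
    apply Bu.ext
    rintro ⟨i, j⟩
    show α (Bu ⟨i, j⟩) = β (Bu ⟨i, j⟩)
    rw [hBu ⟨i, j⟩]
    calc α ((f ^ (j : ℕ)) (u i)) = (f ^ (j : ℕ)) (α (u i)) := (comm_pow_apply' hα _ _).symm
      _ = (f ^ (j : ℕ)) (β (u i)) := by rw [hEq' i]
      _ = β ((f ^ (j : ℕ)) (u i)) := comm_pow_apply' hβ _ _
  · -- SurjOn
    intro v hv
    obtain ⟨hvE, hvI⟩ := hv
    set Bv := hvI.collectedBasis (fun i => cycBasis (hvE i)) with hBvdef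
    have hBv : ∀ p : Σ i, Fin (t i), (Bv p : V) = (f ^ (p.2 : ℕ)) (v p.1) := by
      intro p
      rw [hBvdef, DirectSum.IsInternal.collectedBasis_coe]
      exact cycBasis_coe _ _
    set α := Bu.equiv Bv (Equiv.refl _) with hαdef
    have hαB : ∀ p : Σ i, Fin (t i), α (Bu p) = Bv p := by
      intro p; rw [hαdef, Module.Basis.equiv_apply]; rfl
    have hcomm : (α : V →ₗ[K] V) ∘ₗ f = f ∘ₗ (α : V →ₗ[K] V) := by
      apply Bu.ext
      rintro ⟨i, j⟩
      show α (f (Bu ⟨i, j⟩)) = f (α (Bu ⟨i, j⟩))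
      rw [hαB ⟨i, j⟩, hBu ⟨i, j⟩, hBv ⟨i, j⟩]
      have hfj : ∀ y : V, f ((f ^ (j : ℕ)) y) = (f ^ ((j : ℕ) + 1)) y := by
        intro y; rw [pow_succ', Module.End.mul_apply]
      rw [hfj, hfj]
      by_cases hj1 : (j : ℕ) + 1 < t i
      · have h1 : (f ^ ((j : ℕ) + 1)) (u i) = Bu ⟨i, ⟨(j : ℕ) + 1, hj1⟩⟩ :=
          (hBu ⟨i, ⟨(j : ℕ) + 1, hj1⟩⟩).symm
        rw [h1, hαB, hBv]
      · have hj1' : t i ≤ (j : ℕ) + 1 := le_of_not_gt hj1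
        rw [pow_apply_eq_zero (hu.1 i).1 hj1', pow_apply_eq_zero (hvE i).1 hj1', map_zero]
    refine ⟨α, hcomm, ?_⟩
    funext i
    show α (u i) = v i
    by_cases hti : 0 < t i
    · have h1 : u i = Bu ⟨i, ⟨0, hti⟩⟩ := by rw [hBu]; simp
      have h2 : (Bv ⟨i, ⟨0, hti⟩⟩ : V) = v i := by rw [hBv]; simp
      rw [h1, hαB, h2]
    · have hti0 : t i = 0 := Nat.eq_zero_of_not_pos hti
      have hu0 : u i = 0 := by have := (hu.1 i).1; rwa [hti0, pow_zero, Module.End.one_apply] at this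
      have hv0 : v i = 0 := by have := (hvE i).1; rwa [hti0, pow_zero, Module.End.one_apply] at this
      rw [hu0, hv0, map_zero]
end

section
/- Suppose V = ⟨u_1⟩ ⊕ ⋯ ⊕ ⟨u_n⟩ where each generator u_i has exponent a (all cyclic summands of equal length a). If x ∈ V is nonzero with height h(x) = 0 (i.e., x ∉ fV), then there is an index j such that replacing u_j by x still gives a direct sum decomposition: V = ⟨u_1⟩ ⊕ ⋯ ⊕ ⟨u_{j-1}⟩ ⊕ ⟨x⟩ ⊕ ⟨u_{j+1}⟩ ⊕ ⋯ ⊕ ⟨u_n⟩. -/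
open LinearMap Polynomial
open scoped DirectSum

variable {K : Type*} [Field K] {V : Type*} [AddCommGroup V] [Module K V]

lemma pow_aeval_comm (f : V →ₗ[K] V) (q : K[X]) (i : ℕ) (z : V) :
    (f ^ i) ((aeval f q) z) = (aeval f q) ((f ^ i) z) := by
  have h : f ^ i * aeval f q = aeval f q * f ^ i := by
    calc f ^ i * aeval f q = aeval f (X ^ i * q) := by rw [map_mul, aeval_X_pow]
    _ = aeval f (q * X ^ i) := by rw [mul_comm]
    _ = aeval f q * f ^ i := by rw [map_mul, aeval_X_pow]
  calc (f ^ i) ((aeval f q) z) = (f ^ i * aeval f q) z := rfl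
  _ = (aeval f q * f ^ i) z := by rw [h]
  _ = (aeval f q) ((f ^ i) z) := rfl

lemma aeval_split (f : V →ₗ[K] V) (p : K[X]) (z : V) :
    (aeval f p) z = p.coeff 0 • z + (aeval f p.divX) (f z) := by
  conv_lhs => rw [← p.divX_mul_X_add]
  rw [map_add, map_mul, aeval_X, aeval_C, LinearMap.add_apply, Module.End.mul_apply]
  rw [Module.algebraMap_end_apply, add_comm]

lemma mem_cyc_iff {f : V →ₗ[K] V} {y z : V} :
    z ∈ cyc f y ↔ ∃ p : K[X], (aeval f p) y = z := by
  constructor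
  · intro hz
    refine Submodule.span_induction ?_ ?_ ?_ ?_ hz
    · rintro _ ⟨i, rfl⟩; exact ⟨X ^ i, by rw [aeval_X_pow]⟩
    · exact ⟨0, by simp⟩
    · rintro a b _ _ ⟨p, rfl⟩ ⟨q, rfl⟩; exact ⟨p + q, by rw [map_add, LinearMap.add_apply]⟩
    · rintro c a _ ⟨p, rfl⟩; exact ⟨C c * p, by rw [map_mul, Module.End.mul_apply, aeval_C,
        Module.algebraMap_end_apply]⟩
  · rintro ⟨p, rfl⟩
    induction p using Polynomial.induction_on' with
    | add p q hp hq => rw [map_add, LinearMap.add_apply]; exact Submodule.add_mem _ hp hq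
    | monomial n a =>
        rw [aeval_monomial, Module.End.mul_apply, Module.algebraMap_end_apply]
        exact Submodule.smul_mem _ _ (Submodule.subset_span ⟨n, rfl⟩)

lemma cyc_map_f {f : V →ₗ[K] V} {y z : V} (hz : z ∈ cyc f y) : f z ∈ cyc f y := by
  obtain ⟨p, rfl⟩ := mem_cyc_iff.mp hz
  have : f ((aeval f p) y) = (aeval f (X * p)) y := by
    rw [map_mul, aeval_X, Module.End.mul_apply]
  rw [this]; exact mem_cyc_iff.mpr ⟨_, rfl⟩

lemma cyc_map_aeval {f : V →ₗ[K] V} {y z : V} (q : K[X]) (hz : z ∈ cyc f y) :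
    (aeval f q) z ∈ cyc f y := by
  obtain ⟨p, rfl⟩ := mem_cyc_iff.mp hz
  have : (aeval f q) ((aeval f p) y) = (aeval f (q * p)) y := by rw [map_mul, Module.End.mul_apply]
  rw [this]; exact mem_cyc_iff.mpr ⟨_, rfl⟩

lemma cyc_le {f : V →ₗ[K] V} {y : V} {W : Submodule K V}
    (hW : ∀ z ∈ W, f z ∈ W) (hy : y ∈ W) : cyc f y ≤ W := by
  rw [cyc, Submodule.span_le]
  rintro _ ⟨i, rfl⟩
  induction i with
  | zero => simpa using hy
  | succ i ih =>
      show (f ^ (i + 1)) y ∈ W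
      rw [pow_succ', Module.End.mul_apply]; exact hW _ ih

lemma self_mem_cyc (f : V →ₗ[K] V) (y : V) : y ∈ cyc f y := by
  exact mem_cyc_iff.mpr ⟨1, by simp⟩

lemma mem_cyc_aeval_self {f : V →ₗ[K] V} (hf : IsNilpotent f) {p : K[X]}
    (hc : p.coeff 0 ≠ 0) (u : V) : u ∈ cyc f ((aeval f p) u) := by
  obtain ⟨m, hm⟩ := hf
  set w := (aeval f p) u with hw
  have key : ∀ d i, m ≤ i + d → (f ^ i) u ∈ cyc f w := by
    intro d
    induction d with
    | zero =>
        intro i hi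
        have h1 : f ^ i = f ^ (i - m) * f ^ m := by rw [← pow_add]; congr 1; omega
        have h2 : (f ^ i) u = 0 := by rw [h1, Module.End.mul_apply, hm, LinearMap.zero_apply, map_zero]
        rw [h2]; exact Submodule.zero_mem _
    | succ d ih =>
        intro i hi
        have h1 : (f ^ (i + 1)) u ∈ cyc f w := ih (i + 1) (by omega)
        have h2 : (f ^ i) w = p.coeff 0 • (f ^ i) u + (aeval f p.divX) ((f ^ (i + 1)) u) := by
          rw [hw, pow_aeval_comm, aeval_split f p ((f ^ i) u)]
          congr 2
          rw [pow_succ, Module.End.mul_apply, ← Module.End.mul_apply, ← pow_succ', pow_succ, Module.End.mul_apply]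
        have h3 : (f ^ i) u
            = (p.coeff 0)⁻¹ • ((f ^ i) w - (aeval f p.divX) ((f ^ (i + 1)) u)) := by
          rw [h2, add_sub_cancel_right, smul_smul, inv_mul_cancel₀ hc, one_smul]
        rw [h3]
        refine Submodule.smul_mem _ _ (Submodule.sub_mem _ ?_ ?_)
        · exact Submodule.subset_span ⟨i, rfl⟩
        · exact cyc_map_aeval _ h1
  simpa using key m 0 (by omega)

lemma vanish_of_le {f : V →ₗ[K] V} {y : V} {e : ℕ} (he : (f ^ e) y = 0) :
    ∀ i, e ≤ i → (f ^ i) y = 0 := by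
  intro i hi
  have h1 : f ^ i = f ^ (i - e) * f ^ e := by rw [← pow_add]; congr 1; omega
  rw [h1, Module.End.mul_apply, he, map_zero]

lemma finrank_cyc {f : V →ₗ[K] V} {y : V} {e : ℕ} (he : ExpEq f y e) :
    Module.finrank K (cyc f y) = e := by
  have hvanish := vanish_of_le he.1
  have hspan : cyc f y = Submodule.span K (Set.range fun i : Fin e => (f ^ (i : ℕ)) y) := by
    apply le_antisymm
    · rw [cyc, Submodule.span_le]
      rintro _ ⟨i, rfl⟩
      show (f ^ i) y ∈ _
      by_cases hie : i < e
      · exact Submodule.subset_span ⟨⟨i, hie⟩, rfl⟩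
      · rw [hvanish i (by omega)]
        exact Submodule.zero_mem _
    · rw [Submodule.span_le]
      rintro _ ⟨i, rfl⟩
      exact Submodule.subset_span ⟨(i : ℕ), rfl⟩
  have hli : LinearIndependent K (fun i : Fin e => (f ^ (i : ℕ)) y) := by
    rw [Fintype.linearIndependent_iff]
    intro g hg
    have main : ∀ i, ∀ hi : i < e, g ⟨i, hi⟩ = 0 := by
      intro i
      induction i using Nat.strong_induction_on with
      | _ i ih =>
        intro hi
        have h0 : ∑ k : Fin e, g k • (f ^ (e - 1 - i + (k : ℕ))) y = 0 := by
          have h := congrArg (fun z => (f ^ (e - 1 - i)) z) hg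
          simpa [map_sum, map_smul, ← Module.End.mul_apply, ← pow_add] using h
        have hsum : ∑ k : Fin e, g k • (f ^ (e - 1 - i + (k : ℕ))) y
            = g ⟨i, hi⟩ • (f ^ (e - 1 - i + i)) y := by
          refine Finset.sum_eq_single _ ?_ (fun h => absurd (Finset.mem_univ _) h)
          intro k _ hk
          rcases lt_or_gt_of_ne (fun h : (k : ℕ) = i => hk (by ext; exact h)) with hlt | hgt
          · rw [show g k = 0 from by simpa using ih k hlt k.2, zero_smul]
          · rw [hvanish _ (by omega), smul_zero]
        rw [h0] at hsum
        rw [show e - 1 - i + i = e - 1 from by omega] at hsum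
        rcases smul_eq_zero.mp hsum.symm with h | h
        · exact h
        · exact absurd h (he.2 _ (by omega))
    intro i
    simpa using main i i.2
  rw [hspan, finrank_span_eq_card hli, Fintype.card_fin]

lemma exists_repr {n : ℕ} (A : Fin n → Submodule K V) (htop : ⨆ i, A i = ⊤) (x : V) :
    ∃ v : Fin n → V, (∀ i, v i ∈ A i) ∧ ∑ i, v i = x := by
  have hx : x ∈ LinearMap.range (DirectSum.coeLinearMap A) := by
    rw [DirectSum.range_coeLinearMap, htop]; trivial
  obtain ⟨w, hw⟩ := hx
  refine ⟨fun i => (w i : V), fun i => (w i).2, ?_⟩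
  rw [← hw]
  conv_rhs => rw [← DirectSum.sum_univ_of w]
  rw [map_sum]
  simp

lemma components_zero {n : ℕ} {A : Fin n → Submodule K V}
    (hds : DirectSum.IsInternal A) {v : Fin n → V} (hv : ∀ i, v i ∈ A i)
    (hsum : ∑ i, v i = 0) : ∀ i, v i = 0 := by
  have hbij : Function.Bijective (DirectSum.coeLinearMap A) := hds
  set w : ⨁ i, ↥(A i) := ∑ i, DirectSum.of (fun i => A i) i ⟨v i, hv i⟩ with hwdef
  have hw0 : DirectSum.coeLinearMap A w = 0 := by
    rw [hwdef, map_sum]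
    simpa using hsum
  have hzero : w = 0 := hbij.1 (by rw [hw0, map_zero])
  intro j
  have hcomp : w j = ⟨v j, hv j⟩ := by
    rw [hwdef, DFinsupp.finset_sum_apply]
    have h1 : ∀ i ∈ Finset.univ, i ≠ j →
        ((DirectSum.of (fun i => ↥(A i)) i) ⟨v i, hv i⟩) j = 0 :=
      fun i _ hij => DirectSum.of_eq_of_ne (β := fun i => ↥(A i)) i j _ hij.symm
    rw [Finset.sum_eq_single_of_mem j (Finset.mem_univ j) h1]
    exact DirectSum.of_eq_same (β := fun i => ↥(A i)) j _
  rw [hzero] at hcomp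
  have := congrArg (fun z : A j => (z : V)) hcomp
  simpa using this.symm

lemma one_aeval_comm (f : V →ₗ[K] V) (q : K[X]) (z : V) :
    f ((aeval f q) z) = (aeval f q) (f z) := by
  simpa [pow_one] using pow_aeval_comm f q 1 z

lemma cyc_zero (f : V →ₗ[K] V) : cyc f (0 : V) = ⊥ := by
  rw [cyc, eq_bot_iff, Submodule.span_le]
  rintro _ ⟨i, rfl⟩
  simp

theorem stmt3 [FiniteDimensional K V] (f : V →ₗ[K] V) (hf : IsNilpotent f)
    {n : ℕ} (u : Fin n → V) (a : ℕ) (hexp : ∀ i, ExpEq f (u i) a)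
    (hds : DirectSum.IsInternal fun i => cyc f (u i))
    (x : V) (hx0 : x ≠ 0) (hh : x ∉ LinearMap.range f) :
    ∃ j : Fin n, DirectSum.IsInternal fun i => cyc f (Function.update u j x i) := by
  classical
  have htop : ⨆ i, cyc f (u i) = ⊤ := hds.submodule_iSup_eq_top
  -- degenerate cases
  by_cases hn : n = 0
  · exfalso
    subst hn
    rw [iSup_of_empty] at htop
    exact hx0 ((Submodule.mem_bot K).mp (htop ▸ Submodule.mem_top))
  rcases Nat.eq_zero_or_pos a with ha | ha
  · exfalso
    subst ha
    have hu0 : ∀ i, u i = 0 := by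
      intro i
      have := (hexp i).1
      simpa using this
    have : ⨆ i : Fin n, cyc f (u i) = ⊥ := by
      simp [hu0, cyc_zero]
    rw [this] at htop
    exact hx0 ((Submodule.mem_bot K).mp (htop ▸ Submodule.mem_top))
  -- decompose x
  obtain ⟨v, hv, hvsum⟩ := exists_repr _ htop x
  choose p hp using fun i => mem_cyc_iff.mp (hv i)
  -- find the index j with invertible polynomial
  have hj : ∃ j, (p j).coeff 0 ≠ 0 := by
    by_contra h
    push_neg at h
    apply hh
    refine ⟨∑ i, (aeval f (p i).divX) (u i), ?_⟩
    rw [map_sum, ← hvsum]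
    refine Finset.sum_congr rfl fun i _ => ?_
    rw [← hp i, aeval_split f (p i) (u i), h i, zero_smul, zero_add]
    exact one_aeval_comm f _ _
  obtain ⟨j, hcj⟩ := hj
  -- x has exponent a
  have hxa : ExpEq f x a := by
    constructor
    · rw [← hvsum, map_sum]
      refine Finset.sum_eq_zero fun i _ => ?_
      rw [← hp i, pow_aeval_comm, (hexp i).1, map_zero]
    · intro k hk
      intro hkx
      have h0 : (f ^ (a - 1)) x = 0 := vanish_of_le hkx (a - 1) (by omega)
      have hterm : ∀ i, (f ^ (a - 1)) (v i) = (p i).coeff 0 • (f ^ (a - 1)) (u i) := by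
        intro i
        rw [← hp i, pow_aeval_comm, aeval_split]
        have hfa : f ((f ^ (a - 1)) (u i)) = (f ^ a) (u i) := by
          rw [← Module.End.mul_apply, ← pow_succ']
          congr 2
          omega
        rw [hfa, (hexp i).1, map_zero, add_zero]
      have hz : ∀ i, (p i).coeff 0 • (f ^ (a - 1)) (u i) = 0 := by
        refine components_zero hds (v := fun i => (p i).coeff 0 • (f ^ (a - 1)) (u i))
          (fun i => Submodule.smul_mem _ _ (Submodule.subset_span ⟨a - 1, rfl⟩)) ?_
        have : ∑ i, (f ^ (a - 1)) (v i) = 0 := by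
          rw [← map_sum, hvsum, h0]
        rw [← this]
        exact Finset.sum_congr rfl fun i _ => (hterm i).symm
      rcases smul_eq_zero.mp (hz j) with h | h
      · exact hcj h
      · exact (hexp j).2 (a - 1) (by omega) h
  -- the new family
  set q : Fin n → Submodule K V := fun i => cyc f (Function.update u j x i) with hqdef
  have hqj : q j = cyc f x := by rw [hqdef]; simp
  have hqne : ∀ i, i ≠ j → q i = cyc f (u i) := by
    intro i hij
    rw [hqdef]
    simp [Function.update_of_ne hij]
  have hWinv : ∀ z ∈ (⨆ i, q i), f z ∈ (⨆ i, q i) := by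
    intro z hz
    have hle : Submodule.map f (⨆ i, q i) ≤ ⨆ i, q i := by
      rw [Submodule.map_iSup]
      exact iSup_mono fun i => Submodule.map_le_iff_le_comap.mpr fun z hz => cyc_map_f hz
    exact hle ⟨z, hz, rfl⟩
  have hxmem : x ∈ ⨆ i, q i :=
    Submodule.mem_iSup_of_mem j (by rw [hqj]; exact self_mem_cyc f x)
  have hvj : v j ∈ ⨆ i, q i := by
    have hvjeq : v j = x - ∑ i ∈ Finset.univ.erase j, v i := by
      rw [← hvsum, ← Finset.add_sum_erase _ _ (Finset.mem_univ j)]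
      abel
    rw [hvjeq]
    refine Submodule.sub_mem _ hxmem (Submodule.sum_mem _ fun i hi => ?_)
    exact Submodule.mem_iSup_of_mem i
      (by rw [hqne i (Finset.ne_of_mem_erase hi)]; exact hv i)
  have huj : u j ∈ ⨆ i, q i := by
    have h1 : u j ∈ cyc f (v j) := by
      rw [← hp j]; exact mem_cyc_aeval_self hf hcj _
    exact cyc_le hWinv hvj h1
  have htopq : ⨆ i, q i = ⊤ := by
    rw [eq_top_iff, ← htop]
    refine iSup_le fun i => ?_
    by_cases hij : i = j
    · subst hij
      exact cyc_le hWinv huj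
    · rw [← hqne i hij]
      exact le_iSup q i
  refine ⟨j, ?_⟩
  show Function.Bijective (DirectSum.coeLinearMap q)
  have hsurj : Function.Surjective (DirectSum.coeLinearMap q) := by
    rw [← LinearMap.range_eq_top, DirectSum.range_coeLinearMap, htopq]
  haveI : FiniteDimensional K (⨁ i, ↥(q i)) :=
    LinearEquiv.finiteDimensional (DirectSum.linearEquivFunOnFintype K (Fin n) fun i => ↥(q i)).symm
  have hfr : Module.finrank K (⨁ i, ↥(q i)) = Module.finrank K V := by
    have h1 : Module.finrank K (⨁ i, ↥(q i)) = ∑ i, Module.finrank K (q i) := by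
      rw [(DirectSum.linearEquivFunOnFintype K (Fin n) fun i => ↥(q i)).finrank_eq,
        Module.finrank_pi_fintype]
    have h2 : Module.finrank K (⨁ i, ↥(cyc f (u i))) = ∑ i, Module.finrank K (cyc f (u i)) := by
      rw [(DirectSum.linearEquivFunOnFintype K (Fin n) fun i => ↥(cyc f (u i))).finrank_eq,
        Module.finrank_pi_fintype]
    have h3 : Module.finrank K (⨁ i, ↥(cyc f (u i))) = Module.finrank K V :=
      (LinearEquiv.ofBijective (DirectSum.coeLinearMap fun i => cyc f (u i)) hds).finrank_eq
    have h4 : ∀ i, Module.finrank K (q i) = Module.finrank K (cyc f (u i)) := by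
      intro i
      by_cases hij : i = j
      · subst hij
        rw [hqj, finrank_cyc hxa, finrank_cyc (hexp i)]
      · rw [hqne i hij]
    rw [h1, Finset.sum_congr rfl fun i _ => h4 i, ← h2, h3]
  exact ⟨(LinearMap.injective_iff_surjective_of_finrank_eq_finrank hfr).mpr hsurj, hsurj⟩
end

section
/- Let X be a characteristic subspace of V for a nilpotent f, with exponent decomposition V = ⟨U_{a_1}⟩ ⊕ ⋯ ⊕ ⟨U_{a_m}⟩. Then X̃ = (X ∩ ⟨U_{a_1}⟩) ⊕ ⋯ ⊕ (X ∩ ⟨U_{a_m}⟩) is the largest hyperinvariant subspace of V contained in X. -/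
open LinearMap

variable {K : Type*} [Field K] {V : Type*} [AddCommGroup V] [Module K V]

namespace Aux7
open Polynomial

/-- Evaluation of a polynomial at `f`. -/
noncomputable def pev (f : V →ₗ[K] V) (p : K[X]) : V →ₗ[K] V :=
  Polynomial.aeval (f : Module.End K V) p

lemma pev_add (f : V →ₗ[K] V) (p q : K[X]) : pev f (p + q) = pev f p + pev f q := map_add _ _ _

lemma pev_monomial (f : V →ₗ[K] V) (n : ℕ) (c : K) :
    pev f (Polynomial.monomial n c) = c • (f ^ n) := by
  ext y
  simp [pev, Polynomial.aeval_monomial, Algebra.algebraMap_eq_smul_one, Module.End.mul_apply]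

lemma pow_mem_cyc (f : V →ₗ[K] V) (x : V) (n : ℕ) : (f ^ n) x ∈ cyc f x :=
  Submodule.subset_span ⟨n, rfl⟩

lemma self_mem_cyc (f : V →ₗ[K] V) (x : V) : x ∈ cyc f x := by
  simpa using pow_mem_cyc f x 0

/-- pointwise commutation helper -/
lemma comm_pow {f g : V →ₗ[K] V} (h : ∀ y, g (f y) = f (g y)) (n : ℕ) :
    ∀ y, g ((f ^ n) y) = (f ^ n) (g y) := by
  induction n with
  | zero => simp
  | succ n ih => intro y; rw [pow_succ, Module.End.mul_apply, Module.End.mul_apply, ih (f y), h y]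

lemma comm_pev {f g : V →ₗ[K] V} (h : ∀ y, g (f y) = f (g y)) (p : K[X]) :
    ∀ y, g (pev f p y) = pev f p (g y) := by
  induction p using Polynomial.induction_on' with
  | add p q hp hq => intro y; simp [pev_add, hp y, hq y]
  | monomial n c => intro y; simp [pev_monomial, comm_pow h n y]

lemma pev_comm_f (f : V →ₗ[K] V) (p : K[X]) : ∀ y, pev f p (f y) = f (pev f p y) := by
  intro y; exact (comm_pev (f := f) (g := f) (fun _ => rfl) p y).symm

lemma f_mem_cyc {f : V →ₗ[K] V} {x z : V} (hz : z ∈ cyc f x) : f z ∈ cyc f x := by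
  induction hz using Submodule.span_induction with
  | mem z hz => obtain ⟨n, rfl⟩ := hz; rw [← Module.End.mul_apply, ← pow_succ']; exact pow_mem_cyc f x _
  | zero => simp
  | add a b _ _ ha hb => rw [map_add]; exact Submodule.add_mem _ ha hb
  | smul c a _ ha => rw [map_smul]; exact Submodule.smul_mem _ c ha

lemma pev_mem_cyc {f : V →ₗ[K] V} {x z : V} (p : K[X]) (hz : z ∈ cyc f x) :
    pev f p z ∈ cyc f x := by
  induction p using Polynomial.induction_on' with
  | add p q hp hq => rw [pev_add]; exact Submodule.add_mem _ hp hq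
  | monomial n c =>
    rw [pev_monomial]
    refine Submodule.smul_mem _ c ?_
    induction n with
    | zero => simpa using hz
    | succ n ih =>
      rw [pow_succ', Module.End.mul_apply]
      exact f_mem_cyc ih

lemma mem_cyc_iff_pev {f : V →ₗ[K] V} {x z : V} (hz : z ∈ cyc f x) :
    ∃ p : K[X], z = pev f p x := by
  induction hz using Submodule.span_induction with
  | mem z hz => obtain ⟨n, rfl⟩ := hz; exact ⟨Polynomial.X ^ n, by simp [pev]⟩
  | zero => exact ⟨0, by simp [pev]⟩
  | add a b _ _ ha hb =>
    obtain ⟨p, rfl⟩ := ha; obtain ⟨q, rfl⟩ := hb; exact ⟨p + q, by simp [pev_add]⟩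
  | smul c a _ ha =>
    obtain ⟨p, rfl⟩ := ha; exact ⟨c • p, by simp [pev, map_smul]⟩

lemma pev_mem_of_inv {f : V →ₗ[K] V} {X : Submodule K V} (hXf : X.map f ≤ X) (p : K[X])
    {z : V} (hz : z ∈ X) : pev f p z ∈ X := by
  have hf : ∀ y ∈ X, f y ∈ X := fun y hy => hXf ⟨y, hy, rfl⟩
  induction p using Polynomial.induction_on' with
  | add p q hp hq => rw [pev_add]; exact Submodule.add_mem _ hp hq
  | monomial n c =>
    rw [pev_monomial]
    refine Submodule.smul_mem _ c ?_
    induction n with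
    | zero => simpa using hz
    | succ n ih => rw [pow_succ', Module.End.mul_apply]; exact hf _ ih

lemma expEq_pow_zero {f : V →ₗ[K] V} {x : V} {ℓ : ℕ} (hx : ExpEq f x ℓ) {n : ℕ} (hn : ℓ ≤ n) :
    (f ^ n) x = 0 := by
  have h1 : n - ℓ + ℓ = n := Nat.sub_add_cancel hn
  calc (f ^ n) x = (f ^ (n - ℓ)) ((f ^ ℓ) x) := by
        rw [← Module.End.mul_apply, ← pow_add, h1]
    _ = 0 := by rw [hx.1, map_zero]

lemma expEq_linearIndependent {f : V →ₗ[K] V} {x : V} {ℓ : ℕ} (hx : ExpEq f x ℓ) :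
    LinearIndependent K (fun l : Fin ℓ => (f ^ (l : ℕ)) x) := by
  rw [Fintype.linearIndependent_iff]
  intro g hg
  by_contra hc
  push_neg at hc
  obtain ⟨i0, hi0⟩ := hc
  have hex : ∃ n : ℕ, ∃ h : n < ℓ, g ⟨n, h⟩ ≠ 0 := ⟨i0, i0.isLt, hi0⟩
  classical
  set m := Nat.find hex with hm
  obtain ⟨hmℓ, hgm⟩ := Nat.find_spec hex
  have hmin : ∀ n (h : n < ℓ), n < m → g ⟨n, h⟩ = 0 := by
    intro n h hnm
    by_contra hne
    have : m ≤ n := by apply Nat.find_le; exact ⟨h, hne⟩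
    omega
  have h0 : (f ^ (ℓ - 1 - m)) (∑ i : Fin ℓ, g i • (f ^ (i : ℕ)) x) = 0 := by rw [hg, map_zero]
  rw [map_sum] at h0
  have hterm : ∀ i : Fin ℓ, i ≠ ⟨m, hmℓ⟩ →
      (f ^ (ℓ - 1 - m)) (g i • (f ^ (i : ℕ)) x) = 0 := by
    intro i hi
    rcases lt_or_ge (i : ℕ) m with h | h
    · have : g i = 0 := by
        have := hmin (i : ℕ) i.isLt h
        simpa using this
      rw [this]; simp
    · have : (i : ℕ) ≠ m := fun he => hi (by ext; exact he)
      have hgt : m < (i : ℕ) := lt_of_le_of_ne h (Ne.symm this)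
      rw [map_smul, ← Module.End.mul_apply, ← pow_add]
      rw [expEq_pow_zero hx (by omega)]
      simp
  rw [Finset.sum_eq_single (⟨m, hmℓ⟩ : Fin ℓ)] at h0
  · rw [map_smul, ← Module.End.mul_apply, ← pow_add] at h0
    have : ℓ - 1 - m + m = ℓ - 1 := by omega
    rw [this] at h0
    have hne : (f ^ (ℓ - 1)) x ≠ 0 := hx.2 _ (by omega)
    rcases smul_eq_zero.1 h0 with h | h
    · exact hgm h
    · exact hne h
  · intro b _ hb; exact hterm b hb
  · intro h; exact absurd (Finset.mem_univ _) h

end Aux7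

section Basis7
variable {K : Type*} [Field K] {V : Type*} [AddCommGroup V] [Module K V]
open Aux7 Set

namespace Aux7

lemma cyc_eq_span_fin {f : V →ₗ[K] V} {x : V} {ℓ : ℕ} (hx : ExpEq f x ℓ) :
    cyc f x = Submodule.span K (Set.range fun l : Fin ℓ => (f ^ (l : ℕ)) x) := by
  apply le_antisymm
  · rw [cyc, Submodule.span_le]
    rintro _ ⟨n, rfl⟩
    show (f ^ n) x ∈ _
    rcases lt_or_ge n ℓ with h | h
    · exact Submodule.subset_span ⟨⟨n, h⟩, rfl⟩
    · rw [expEq_pow_zero hx h]; exact Submodule.zero_mem _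
  · rw [Submodule.span_le]
    rintro _ ⟨l, rfl⟩
    exact pow_mem_cyc f x _


/-- basis family for `cyc f x` -/
noncomputable def cycFam (f : V →ₗ[K] V) (x : V) (ℓ : ℕ) (l : Fin ℓ) : ↥(cyc f x) :=
  ⟨(f ^ (l : ℕ)) x, pow_mem_cyc f x _⟩

/-- basis of `cyc f x` -/
noncomputable def basisCyc {f : V →ₗ[K] V} {x : V} {ℓ : ℕ} (hx : ExpEq f x ℓ) :
    Module.Basis (Fin ℓ) K ↥(cyc f x) := by
  refine Module.Basis.mk (v := cycFam f x ℓ) ?_ ?_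
  · have h1 : LinearIndependent K ((cyc f x).subtype ∘ cycFam f x ℓ) := by
      have : (cyc f x).subtype ∘ cycFam f x ℓ = fun l : Fin ℓ => (f ^ (l : ℕ)) x := rfl
      rw [this]; exact expEq_linearIndependent hx
    exact h1.of_comp _
  · have hinj := Submodule.map_injective_of_injective (cyc f x).injective_subtype
    have himg : (cyc f x).subtype '' Set.range (cycFam f x ℓ) =
        Set.range fun l : Fin ℓ => (f ^ (l : ℕ)) x := by
      ext y
      constructor
      · rintro ⟨z, ⟨l, rfl⟩, rfl⟩; exact ⟨l, rfl⟩
      · rintro ⟨l, rfl⟩; exact ⟨cycFam f x ℓ l, ⟨l, rfl⟩, rfl⟩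
    have : Submodule.map (cyc f x).subtype (Submodule.span K (Set.range (cycFam f x ℓ))) =
        Submodule.map (cyc f x).subtype ⊤ := by
      rw [Submodule.map_span, himg, Submodule.map_subtype_top, ← cyc_eq_span_fin hx]
    exact le_of_eq (hinj this).symm

lemma basisCyc_apply {f : V →ₗ[K] V} {x : V} {ℓ : ℕ} (hx : ExpEq f x ℓ) (l : Fin ℓ) :
    basisCyc hx l = cycFam f x ℓ l := by
  rw [basisCyc, Module.Basis.mk_apply]

end Aux7
end Basis7

section Proj7
open DirectSum
variable {K : Type*} [Field K] {V : Type*} [AddCommGroup V] [Module K V]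
namespace Aux7
open DirectSum
variable {k : ℕ} {f : V →ₗ[K] V} {u : Fin k → V} {t : Fin k → ℕ}

/-- the internal direct sum equivalence -/
noncomputable def eIso (h : DirectSum.IsInternal fun i : Fin k => cyc f (u i)) :
    (⨁ i : Fin k, ↥(cyc f (u i))) ≃ₗ[K] V :=
  LinearEquiv.ofBijective (DirectSum.coeLinearMap fun i => cyc f (u i)) h

/-- projection onto the `i`-th block, valued in the submodule -/
noncomputable def piS (h : DirectSum.IsInternal fun i : Fin k => cyc f (u i)) (i : Fin k) :
    V →ₗ[K] ↥(cyc f (u i)) :=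
  (DirectSum.component K (Fin k) (fun i => ↥(cyc f (u i))) i) ∘ₗ ((eIso h).symm : V →ₗ[K] _)

/-- projection onto the `i`-th block, as an endomorphism of `V` -/
noncomputable def prj (h : DirectSum.IsInternal fun i : Fin k => cyc f (u i)) (i : Fin k) :
    V →ₗ[K] V :=
  (cyc f (u i)).subtype ∘ₗ piS h i

lemma prj_mem (h : DirectSum.IsInternal fun i : Fin k => cyc f (u i)) (i : Fin k) (y : V) :
    prj h i y ∈ cyc f (u i) := (piS h i y).2

lemma eIso_symm_of (h : DirectSum.IsInternal fun i : Fin k => cyc f (u i)) (j : Fin k)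
    {y : V} (hy : y ∈ cyc f (u j)) :
    (eIso h).symm y = DirectSum.lof K (Fin k) (fun i => ↥(cyc f (u i))) j ⟨y, hy⟩ := by
  rw [LinearEquiv.symm_apply_eq]
  exact (by rw [eIso]; erw [LinearEquiv.ofBijective_apply]; rw [DirectSum.lof_eq_of,
    DirectSum.coeLinearMap_of] :
    eIso h (DirectSum.lof K (Fin k) (fun i => ↥(cyc f (u i))) j ⟨y, hy⟩) = y).symm

lemma piS_of_mem_self (h : DirectSum.IsInternal fun i : Fin k => cyc f (u i)) (i : Fin k)
    {y : V} (hy : y ∈ cyc f (u i)) : piS h i y = ⟨y, hy⟩ := by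
  rw [piS, LinearMap.comp_apply]
  erw [eIso_symm_of h i hy]
  exact DirectSum.component.lof_self K i _

lemma piS_of_mem_ne (h : DirectSum.IsInternal fun i : Fin k => cyc f (u i)) {i j : Fin k}
    (hij : j ≠ i) {y : V} (hy : y ∈ cyc f (u j)) : piS h i y = 0 := by
  rw [piS, LinearMap.comp_apply]
  erw [eIso_symm_of h j hy]
  rw [DirectSum.component.of]
  simp [hij]

lemma prj_of_mem_self (h : DirectSum.IsInternal fun i : Fin k => cyc f (u i)) (i : Fin k)
    {y : V} (hy : y ∈ cyc f (u i)) : prj h i y = y := by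
  rw [prj, LinearMap.comp_apply, piS_of_mem_self h i hy]; rfl

lemma prj_of_mem_ne (h : DirectSum.IsInternal fun i : Fin k => cyc f (u i)) {i j : Fin k}
    (hij : j ≠ i) {y : V} (hy : y ∈ cyc f (u j)) : prj h i y = 0 := by
  rw [prj, LinearMap.comp_apply, piS_of_mem_ne h hij hy]; rfl

lemma sum_prj (h : DirectSum.IsInternal fun i : Fin k => cyc f (u i)) (y : V) :
    ∑ i, prj h i y = y := by
  classical
  set d := (eIso h).symm y with hd
  have h1 : y = eIso h d := by rw [hd, LinearEquiv.apply_symm_apply]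
  have h2 : d = ∑ i, DirectSum.of (fun i => ↥(cyc f (u i))) i (d i) :=
    (DirectSum.sum_univ_of d).symm
  calc ∑ i, prj h i y = eIso h d := by
        rw [h2, map_sum]
        apply Finset.sum_congr rfl
        intro i _
        show prj h i y = eIso h (DirectSum.of _ i (d i))
        have : eIso h (DirectSum.of _ i (d i)) = ((d i : V)) := by
          show DirectSum.coeLinearMap _ _ = _
          rw [DirectSum.coeLinearMap_of]
        rw [this]
        rfl
    _ = y := h1.symm
end Aux7
end Proj7

section Gen7
variable {K : Type*} [Field K] {V : Type*} [AddCommGroup V] [Module K V]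
namespace Aux7
open DirectSum
variable {k : ℕ} {f : V →ₗ[K] V} {u : Fin k → V} {t : Fin k → ℕ}

lemma span_gen_top (h : DirectSum.IsInternal fun i : Fin k => cyc f (u i)) :
    Submodule.span K {y : V | ∃ i : Fin k, ∃ l : ℕ, (f ^ l) (u i) = y} = ⊤ := by
  rw [eq_top_iff, ← h.submodule_iSup_eq_top]
  apply iSup_le
  intro i
  rw [cyc, Submodule.span_le]
  rintro _ ⟨l, rfl⟩
  exact Submodule.subset_span ⟨i, l, rfl⟩

lemma ext_gen (h : DirectSum.IsInternal fun i : Fin k => cyc f (u i)) {g₁ g₂ : V →ₗ[K] V}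
    (hg : ∀ (i : Fin k) (l : ℕ), g₁ ((f ^ l) (u i)) = g₂ ((f ^ l) (u i))) : g₁ = g₂ := by
  apply LinearMap.ext_on (span_gen_top h)
  rintro _ ⟨i, l, rfl⟩
  exact hg i l

lemma prj_gen_self (h : DirectSum.IsInternal fun i : Fin k => cyc f (u i)) (i : Fin k) (l : ℕ) :
    prj h i ((f ^ l) (u i)) = (f ^ l) (u i) :=
  prj_of_mem_self h i (pow_mem_cyc f (u i) l)

lemma prj_gen_ne (h : DirectSum.IsInternal fun i : Fin k => cyc f (u i)) {i m : Fin k}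
    (him : m ≠ i) (l : ℕ) : prj h i ((f ^ l) (u m)) = 0 :=
  prj_of_mem_ne h him (pow_mem_cyc f (u m) l)

lemma pow_succ_apply' (f : V →ₗ[K] V) (l : ℕ) (y : V) : f ((f ^ l) y) = (f ^ (l + 1)) y := by
  rw [pow_succ', Module.End.mul_apply]

lemma prj_comm_f (h : DirectSum.IsInternal fun i : Fin k => cyc f (u i)) (i : Fin k) :
    prj h i ∘ₗ f = f ∘ₗ prj h i := by
  apply ext_gen h
  intro m l
  rw [LinearMap.comp_apply, LinearMap.comp_apply, pow_succ_apply']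
  by_cases hmi : m = i
  · subst hmi
    rw [prj_gen_self h m, prj_gen_self h m, pow_succ_apply']
  · rw [prj_gen_ne h hmi, prj_gen_ne h hmi, map_zero]

/-- The shift map sending the `i`-th block generator to the `j`-th, zero on other blocks. -/
noncomputable def shift (hu1 : ∀ i, ExpEq f (u i) (t i))
    (h : DirectSum.IsInternal fun i : Fin k => cyc f (u i)) (i j : Fin k) : V →ₗ[K] V :=
  ((basisCyc (hu1 i)).constr K fun l : Fin (t i) => (f ^ (l : ℕ)) (u j)) ∘ₗ piS h i

lemma shift_mem (hu1 : ∀ i, ExpEq f (u i) (t i))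
    (h : DirectSum.IsInternal fun i : Fin k => cyc f (u i)) (i j : Fin k) (y : V) :
    shift hu1 h i j y ∈ cyc f (u j) := by
  have h1 : shift hu1 h i j y ∈
      LinearMap.range ((basisCyc (hu1 i)).constr K fun l : Fin (t i) => (f ^ (l : ℕ)) (u j)) :=
    ⟨piS h i y, rfl⟩
  rw [Module.Basis.constr_range] at h1
  refine Submodule.span_le.2 ?_ h1
  rintro _ ⟨l, rfl⟩
  exact pow_mem_cyc f (u j) _

lemma shift_zero_of_mem_ne (hu1 : ∀ i, ExpEq f (u i) (t i))
    (h : DirectSum.IsInternal fun i : Fin k => cyc f (u i)) {i m : Fin k} (j : Fin k)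
    (him : m ≠ i) {y : V} (hy : y ∈ cyc f (u m)) : shift hu1 h i j y = 0 := by
  rw [shift, LinearMap.comp_apply, piS_of_mem_ne h him hy, map_zero]

lemma shift_gen_self (hu1 : ∀ i, ExpEq f (u i) (t i))
    (h : DirectSum.IsInternal fun i : Fin k => cyc f (u i)) {i j : Fin k} (hij : t i = t j)
    (l : ℕ) : shift hu1 h i j ((f ^ l) (u i)) = (f ^ l) (u j) := by
  rcases lt_or_ge l (t i) with hl | hl
  · rw [shift, LinearMap.comp_apply, piS_of_mem_self h i (pow_mem_cyc f (u i) l)]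
    have hb : (⟨(f ^ l) (u i), pow_mem_cyc f (u i) l⟩ : ↥(cyc f (u i))) =
        basisCyc (hu1 i) ⟨l, hl⟩ := by
      rw [basisCyc_apply]; rfl
    rw [hb, Module.Basis.constr_basis]
  · rw [expEq_pow_zero (hu1 i) hl, map_zero,
      expEq_pow_zero (hu1 j) (by omega : t j ≤ l)]

lemma shift_comm_f (hu1 : ∀ i, ExpEq f (u i) (t i))
    (h : DirectSum.IsInternal fun i : Fin k => cyc f (u i)) {i j : Fin k} (hij : t i = t j) :
    shift hu1 h i j ∘ₗ f = f ∘ₗ shift hu1 h i j := by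
  apply ext_gen h
  intro m l
  rw [LinearMap.comp_apply, LinearMap.comp_apply, pow_succ_apply']
  by_cases hmi : m = i
  · subst hmi
    rw [shift_gen_self hu1 h hij, shift_gen_self hu1 h hij, pow_succ_apply']
  · rw [shift_zero_of_mem_ne hu1 h j hmi (pow_mem_cyc f (u m) _),
      shift_zero_of_mem_ne hu1 h j hmi (pow_mem_cyc f (u m) _), map_zero]

end Aux7
end Gen7

section Key7
variable {K : Type*} [Field K] {V : Type*} [AddCommGroup V] [Module K V]

open Polynomial
namespace Aux7
variable {k : ℕ} {f : V →ₗ[K] V} {u : Fin k → V} {t : Fin k → ℕ}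

lemma sq_zero_mem (f : V →ₗ[K] V) {X : Submodule K V} (hX : Chinv f X)
    {N : V →ₗ[K] V} (hN2 : ∀ y, N (N y) = 0) (hNf : N ∘ₗ f = f ∘ₗ N)
    {x : V} (hx : x ∈ X) : N x ∈ X := by
  have hNfp : ∀ y, N (f y) = f (N y) := fun y => by
    have := LinearMap.ext_iff.1 hNf y
    simpa using this
  set α : V ≃ₗ[K] V := LinearEquiv.ofLinear (LinearMap.id + N) (LinearMap.id - N)
    (by ext y
        simp only [LinearMap.comp_apply, LinearMap.add_apply, LinearMap.sub_apply,
          LinearMap.id_apply, map_sub, hN2 y, LinearMap.id_coe, id_eq]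
        abel)
    (by ext y
        simp only [LinearMap.comp_apply, LinearMap.add_apply, LinearMap.sub_apply,
          LinearMap.id_apply, map_add, hN2 y, LinearMap.id_coe, id_eq]
        abel) with hα
  have hcoe : (α : V →ₗ[K] V) = LinearMap.id + N := rfl
  have hcomm : (α : V →ₗ[K] V) ∘ₗ f = f ∘ₗ (α : V →ₗ[K] V) := by
    rw [hcoe]; ext y
    simp [hNfp y]
  have hmap := hX.2 α hcomm
  have h1 : (α : V →ₗ[K] V) x ∈ X := hmap ▸ Submodule.mem_map_of_mem hx
  rw [hcoe] at h1
  simpa using X.sub_mem h1 hx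

lemma key (hu1 : ∀ i, ExpEq f (u i) (t i))
    (h : DirectSum.IsInternal fun i : Fin k => cyc f (u i))
    {X : Submodule K V} (hX : Chinv f X) {g : V →ₗ[K] V} (hg : g ∘ₗ f = f ∘ₗ g)
    {a : ℕ} {x : V} (hxX : x ∈ X) (hxU : x ∈ subU f u t a) (j : Fin k) :
    prj h j (g x) ∈ X := by
  classical
  have hgf : ∀ y, g (f y) = f (g y) := fun y => by
    have := LinearMap.ext_iff.1 hg y; simpa using this
  have hprjf : ∀ (i : Fin k) (y : V), prj h i (f y) = f (prj h i y) := fun i y => by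
    have := LinearMap.ext_iff.1 (prj_comm_f h i) y; simpa using this
  set S : Finset (Fin k) := Finset.univ.filter (fun i => t i = a) with hS
  have hmemS : ∀ i : Fin k, i ∈ S ↔ t i = a := by
    intro i; simp [hS]
  have hprj_subU_zero : ∀ i : Fin k, t i ≠ a → prj h i x = 0 := by
    intro i hi
    have hle : subU f u t a ≤ LinearMap.ker (prj h i) := by
      refine iSup_le fun m => iSup_le fun hm => ?_
      intro y hy
      have hne : m ≠ i := fun he => hi (he ▸ hm)
      exact LinearMap.mem_ker.2 (prj_of_mem_ne h hne hy)
    exact LinearMap.mem_ker.1 (hle hxU)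
  have hxsum : ∑ i ∈ S, prj h i x = x := by
    rw [Finset.sum_subset (Finset.subset_univ S)
      (fun i _ hiS => hprj_subU_zero i (fun ha' => hiS ((hmemS i).2 ha')))]
    exact sum_prj h x
  by_cases haj : t j = a
  · -- j has exponent a
    have hjS : j ∈ S := (hmemS j).2 haj
    have hsplit : prj h j (g x) = ∑ i ∈ S, prj h j (g (prj h i x)) := by
      conv_lhs => rw [← hxsum]
      rw [map_sum, map_sum]
    rw [hsplit]
    apply Submodule.sum_mem
    intro i hiS
    by_cases hij : i = j
    · -- diagonal term
      subst hij
      obtain ⟨p, hp⟩ := mem_cyc_iff_pev (prj_mem h i (g (u i)))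
      have hpev_pow : ∀ (l : ℕ) (y : V), pev f p ((f ^ l) y) = (f ^ l) (pev f p y) :=
        fun l y => comm_pow (f := f) (g := pev f p) (fun z => pev_comm_f f p z) l y
      have hprj_pow : ∀ (r : Fin k) (l : ℕ) (y : V), prj h r ((f ^ l) y) = (f ^ l) (prj h r y) :=
        fun r l y => comm_pow (fun z => hprjf r z) l y
      have hg_pow : ∀ (l : ℕ) (y : V), g ((f ^ l) y) = (f ^ l) (g y) :=
        fun l y => comm_pow hgf l y
      have hmapid : prj h i ∘ₗ (g ∘ₗ prj h i) = pev f p ∘ₗ prj h i := by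
        apply ext_gen h
        intro m l
        by_cases hmi : m = i
        · subst hmi
          rw [LinearMap.comp_apply, LinearMap.comp_apply, LinearMap.comp_apply,
            prj_gen_self h m l, hg_pow l (u m), hprj_pow m l (g (u m)), hp,
            hpev_pow l (u m)]
        · rw [LinearMap.comp_apply, LinearMap.comp_apply, LinearMap.comp_apply,
            prj_gen_ne h hmi l, map_zero, map_zero, map_zero]
      have hdiag : prj h i (g (prj h i x)) = pev f p (prj h i x) := by
        have := LinearMap.ext_iff.1 hmapid x
        simpa using this
      rw [hdiag]
      have hadd : prj h i x + ∑ m ∈ S.erase i, prj h m x = x := by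
        rw [Finset.add_sum_erase S (fun m => prj h m x) hjS, hxsum]
      have herase : prj h i x = x - ∑ m ∈ S.erase i, prj h m x := eq_sub_of_add_eq hadd
      rw [herase, map_sub]
      refine Submodule.sub_mem _ (pev_mem_of_inv hX.1 p hxX) ?_
      rw [map_sum]
      apply Submodule.sum_mem
      intro m hm
      obtain ⟨hmne, hmS⟩ := Finset.mem_erase.1 hm
      have htm : t m = t i := by rw [(hmemS m).1 hmS, ← haj]
      set B : V →ₗ[K] V := shift hu1 h m i with hB
      set A : V →ₗ[K] V := pev f p ∘ₗ shift hu1 h i m with hA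
      have hBx : B x ∈ X := by
        refine sq_zero_mem f hX (fun y => ?_) (shift_comm_f hu1 h htm) hxX
        exact shift_zero_of_mem_ne hu1 h i (Ne.symm hmne) (shift_mem hu1 h m i y)
      have hA2 : ∀ y, A (A y) = 0 := by
        intro y
        have h1 : A y ∈ cyc f (u m) :=
          pev_mem_cyc p (shift_mem hu1 h i m y)
        show pev f p (shift hu1 h i m (A y)) = 0
        rw [shift_zero_of_mem_ne hu1 h m hmne h1, map_zero]
      have hAf : A ∘ₗ f = f ∘ₗ A := by
        ext y
        show pev f p (shift hu1 h i m (f y)) = f (pev f p (shift hu1 h i m y))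
        have h1 := LinearMap.ext_iff.1 (shift_comm_f hu1 h htm.symm) y
        simp only [LinearMap.comp_apply] at h1
        rw [h1, pev_comm_f]
      have hABx : A (B x) ∈ X := sq_zero_mem f hX hA2 hAf hBx
      have hcompid : shift hu1 h i m ∘ₗ shift hu1 h m i = prj h m := by
        apply ext_gen h
        intro r l
        by_cases hrm : r = m
        · subst hrm
          rw [LinearMap.comp_apply, shift_gen_self hu1 h htm l,
            shift_gen_self hu1 h htm.symm l, prj_gen_self h r l]
        · rw [LinearMap.comp_apply,
            shift_zero_of_mem_ne hu1 h i hrm (pow_mem_cyc f (u r) l), map_zero,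
            prj_gen_ne h hrm l]
      have : A (B x) = pev f p (prj h m x) := by
        show pev f p (shift hu1 h i m (shift hu1 h m i x)) = pev f p (prj h m x)
        rw [← LinearMap.comp_apply (shift hu1 h i m), hcompid]
      rw [← this]
      exact hABx
    · -- off-diagonal term
      set N : V →ₗ[K] V := prj h j ∘ₗ g ∘ₗ prj h i with hN
      have hN2 : ∀ y, N (N y) = 0 := by
        intro y
        have h1 : N y ∈ cyc f (u j) := prj_mem h j _
        have h2 : prj h i (N y) = 0 := prj_of_mem_ne h (fun he => hij he.symm) h1
        show prj h j (g (prj h i (N y))) = 0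
        rw [h2, map_zero, map_zero]
      have hNf : N ∘ₗ f = f ∘ₗ N := by
        ext y
        simp [hN, hprjf, hgf, hprjf i y]
      have := sq_zero_mem f hX hN2 hNf hxX
      simpa [hN] using this
  · -- t j ≠ a
    set Pa : V →ₗ[K] V := ∑ i ∈ S, prj h i with hPa
    have hPa_apply : ∀ y, Pa y = ∑ i ∈ S, prj h i y := fun y => by
      simp [hPa, LinearMap.sum_apply]
    have hPax : Pa x = x := by rw [hPa_apply, hxsum]
    set T : V →ₗ[K] V := prj h j ∘ₗ g ∘ₗ Pa with hT
    have hT_apply : ∀ y, T y = prj h j (g (Pa y)) := fun y => rfl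
    have hT2 : ∀ y, T (T y) = 0 := by
      intro y
      have h1 : T y ∈ cyc f (u j) := prj_mem h j _
      have h2 : Pa (T y) = 0 := by
        rw [hPa_apply]
        apply Finset.sum_eq_zero
        intro i hiS
        have hne : j ≠ i := fun he => haj (he ▸ (hmemS i).1 hiS)
        exact prj_of_mem_ne h hne h1
      rw [hT_apply, h2, map_zero, map_zero]
    have hPaf : ∀ y, Pa (f y) = f (Pa y) := by
      intro y
      rw [hPa_apply, hPa_apply, map_sum]
      exact Finset.sum_congr rfl fun i _ => hprjf i y
    have hTf : T ∘ₗ f = f ∘ₗ T := by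
      ext y
      show T (f y) = f (T y)
      rw [hT_apply, hT_apply, hPaf, hgf, hprjf]
    have := sq_zero_mem f hX hT2 hTf hxX
    rw [hT_apply, hPax] at this
    exact this

end Aux7
end Key7

theorem stmt7 [FiniteDimensional K V] (f : V →ₗ[K] V) (hf : IsNilpotent f)
    {k : ℕ} (u : Fin k → V) (t : Fin k → ℕ) (ht : Monotone t) (hu : IsGenTuple f u t)
    (X : Submodule K V) (hX : Chinv f X) :
    IsGreatest {W : Submodule K V | Hinv f W ∧ W ≤ X}
      (⨆ a ∈ Set.range t, X ⊓ subU f u t a) := by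
  classical
  obtain ⟨hu1, h⟩ := hu
  constructor
  · constructor
    · -- hyperinvariance of the sum
      intro g hg
      rw [Submodule.map_le_iff_le_comap]
      refine iSup_le fun a => iSup_le fun ha => ?_
      rintro x ⟨hxX, hxU⟩
      refine Submodule.mem_comap.2 ?_
      rw [← Aux7.sum_prj h (g x)]
      apply Submodule.sum_mem
      intro j _
      have h1 : Aux7.prj h j (g x) ∈ X := Aux7.key hu1 h hX hg hxX hxU j
      have h2 : Aux7.prj h j (g x) ∈ subU f u t (t j) := by
        apply Submodule.mem_iSup_of_mem j
        exact Submodule.mem_iSup_of_mem (show t j = t j from rfl) (Aux7.prj_mem h j (g x))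
      exact Submodule.mem_iSup_of_mem (t j)
        (Submodule.mem_iSup_of_mem ⟨j, rfl⟩ ⟨h1, h2⟩)
    · exact iSup_le fun a => iSup_le fun _ => inf_le_left
  · rintro W ⟨hWh, hWX⟩ w hw
    rw [← Aux7.sum_prj h w]
    apply Submodule.sum_mem
    intro i _
    have h1 : Aux7.prj h i w ∈ W := hWh (Aux7.prj h i) (Aux7.prj_comm_f h i) ⟨w, hw, rfl⟩
    have h2 : Aux7.prj h i w ∈ subU f u t (t i) := by
      apply Submodule.mem_iSup_of_mem i
      exact Submodule.mem_iSup_of_mem (show t i = t i from rfl) (Aux7.prj_mem h i w)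
    exact Submodule.mem_iSup_of_mem (t i)
      (Submodule.mem_iSup_of_mem ⟨i, rfl⟩ ⟨hWX h1, h2⟩)
end

section
/- Suppose f is nilpotent on V with V[f] = f^{a−1}V and dim V[f] = k > 1 (i.e., all k > 1 Jordan blocks of f have equal size a). Then there exist automorphisms β and γ of V, both commuting with f, such that β + γ = id_V. -/
open LinearMap

variable {K : Type*} [Field K] {V : Type*} [AddCommGroup V] [Module K V]

theorem stmt9 [FiniteDimensional K V] (f : V →ₗ[K] V) (hf : IsNilpotent f)
    (a k : ℕ) (ha : 1 ≤ a) (hker : LinearMap.ker f = LinearMap.range (f ^ (a - 1)))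
    (hk : Module.finrank K ↥(LinearMap.ker f) = k) (hk1 : 1 < k) :
    ∃ β γ : V ≃ₗ[K] V,
      (β : V →ₗ[K] V) ∘ₗ f = f ∘ₗ (β : V →ₗ[K] V) ∧
      (γ : V →ₗ[K] V) ∘ₗ f = f ∘ₗ (γ : V →ₗ[K] V) ∧
      (β : V →ₗ[K] V) + (γ : V →ₗ[K] V) = LinearMap.id := by
  classical
  -- Step 1 : f ^ a = 0
  have hfa : f ^ a = 0 := by
    ext x
    have h1 : (f ^ (a-1)) x ∈ LinearMap.range (f ^ (a-1)) := ⟨x, rfl⟩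
    rw [← hker, LinearMap.mem_ker] at h1
    have hA : a = 1 + (a - 1) := by omega
    rw [LinearMap.zero_apply, hA, pow_add, pow_one, Module.End.mul_apply]
    exact h1
  -- Step 2 : dimension bound  finrank V ≤ a * k
  have key : ∀ j : ℕ, Module.finrank K (LinearMap.ker (f ^ j)) ≤ j * k := by
    intro j
    induction j with
    | zero =>
      rw [pow_zero, Module.End.one_eq_id, LinearMap.ker_id, finrank_bot]
      omega
    | succ j ih =>
      set g := f.domRestrict (LinearMap.ker (f ^ (j+1))) with hgdef
      have hrn := LinearMap.finrank_range_add_finrank_ker g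
      have hr1 : LinearMap.range g ≤ LinearMap.ker (f ^ j) := by
        rintro _ ⟨⟨x, hx⟩, rfl⟩
        simp only [LinearMap.domRestrict_apply, LinearMap.mem_ker, hgdef]
        rw [← Module.End.mul_apply, ← pow_succ]
        exact hx
      have hr : Module.finrank K (LinearMap.range g) ≤ Module.finrank K (LinearMap.ker (f ^ j)) :=
        Submodule.finrank_mono hr1
      have hker2 : Module.finrank K (LinearMap.ker g) ≤ k := by
        have hmap : Submodule.map (LinearMap.ker (f ^ (j+1))).subtype (LinearMap.ker g) ≤
            LinearMap.ker f := by
          rintro _ ⟨⟨x, hx⟩, hx2, rfl⟩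
          exact hx2
        calc Module.finrank K (LinearMap.ker g)
            = Module.finrank K (Submodule.map (LinearMap.ker (f ^ (j+1))).subtype
                (LinearMap.ker g)) := (Submodule.finrank_map_subtype_eq _ _).symm
          _ ≤ Module.finrank K (LinearMap.ker f) := Submodule.finrank_mono hmap
          _ = k := hk
      rw [← hrn, Nat.succ_mul]
      exact Nat.add_le_add (le_trans hr ih) hker2
  have hdimle : Module.finrank K V ≤ a * k := by
    have h1 : LinearMap.ker (f ^ a) = ⊤ := by rw [hfa]; exact LinearMap.ker_zero
    have h2 := key a
    rwa [h1, finrank_top] at h2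
  -- Step 3 : basis of the kernel and generators
  let w : Module.Basis (Fin k) K (LinearMap.ker f) := Module.finBasisOfFinrankEq K _ hk
  have hw : ∀ i, ((w i : V)) ∈ LinearMap.range (f ^ (a-1)) := fun i => hker ▸ (w i).2
  choose u hu using hw
  have hwli : LinearIndependent K (fun i => ((w i : V))) :=
    w.linearIndependent.map' (LinearMap.ker f).subtype (Submodule.ker_subtype _)
  -- the candidate basis vectors
  set b : Fin k × Fin a → V := fun p => (f ^ (p.2 : ℕ)) (u p.1) with hbdef
  have hfb0 : ∀ (m : ℕ) (i : Fin k), a ≤ m → (f ^ m) (u i) = 0 := by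
    intro m i hm
    have h2 : f ^ m = f ^ (m - a) * f ^ a := by rw [← pow_add]; congr 1; omega
    rw [h2, hfa, mul_zero, LinearMap.zero_apply]
  -- Step 4 : linear independence
  have hbind : LinearIndependent K b := by
    rw [Fintype.linearIndependent_iff]
    intro g hg
    have main : ∀ n : ℕ, ∀ p : Fin k × Fin a, (p.2 : ℕ) = n → g p = 0 := by
      intro n
      induction n using Nat.strong_induction_on with
      | _ n ih =>
        rintro ⟨pi, pj⟩ hp
        have hp' : (pj : ℕ) = n := hp
        have hn : n < a := hp' ▸ pj.2
        have happ : ∑ q : Fin k × Fin a, g q • (f ^ (a - 1 - n + (q.2:ℕ))) (u q.1) = 0 := by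
          have h3 := congrArg (f ^ (a - 1 - n)) hg
          rw [map_sum, map_zero] at h3
          rw [← h3]
          refine Finset.sum_congr rfl (fun q _ => ?_)
          rw [map_smul, hbdef, ← Module.End.mul_apply, ← pow_add]
        rw [Fintype.sum_prod_type] at happ
        have hrow : ∀ i : Fin k,
            (∑ j : Fin a, g (i, j) • (f ^ (a - 1 - n + (j:ℕ))) (u i))
              = g (i, pj) • ((w i : V)) := by
          intro i
          rw [Finset.sum_eq_single pj]
          · have : a - 1 - n + (pj : ℕ) = a - 1 := by omega
            rw [this, hu]
          · intro j _ hne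
            rcases lt_trichotomy (j : ℕ) n with h | h | h
            · rw [ih _ h (i, j) rfl, zero_smul]
            · exact absurd (Fin.ext (h.trans hp'.symm) : j = pj) hne
            · rw [hfb0 _ _ (by omega), smul_zero]
          · intro h; exact absurd (Finset.mem_univ pj) h
        rw [Finset.sum_congr rfl (fun i _ => hrow i)] at happ
        have := Fintype.linearIndependent_iff.mp hwli (fun i => g (i, pj)) happ pi
        exact this
    intro p; exact main (p.2 : ℕ) p rfl
  -- Step 5 : it is a basis
  have hcard : Fintype.card (Fin k × Fin a) = Module.finrank K V := by
    have hle := hbind.fintype_card_le_finrank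
    simp only [Fintype.card_prod, Fintype.card_fin] at hle ⊢
    exact le_antisymm hle (by rwa [Nat.mul_comm] at hdimle)
  have hne : Nonempty (Fin k × Fin a) := ⟨⟨⟨0, by omega⟩, ⟨0, by omega⟩⟩⟩
  let B : Module.Basis (Fin k × Fin a) K V := basisOfLinearIndependentOfCardEqFinrank hbind hcard
  have hB : ∀ p, B p = b p := fun p => by
    rw [show B = _ from rfl, coe_basisOfLinearIndependentOfCardEqFinrank]
  -- Step 6 : action of f on the basis
  have hfB : ∀ (i : Fin k) (j : Fin a), f (B (i, j)) =
      if h : (j:ℕ)+1 < a then B (i, ⟨(j:ℕ)+1, h⟩) else 0 := by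
    intro i j
    have h1 : f (B (i, j)) = (f ^ ((j:ℕ)+1)) (u i) := by
      rw [hB, hbdef, pow_succ', Module.End.mul_apply]
    by_cases h : (j:ℕ)+1 < a
    · rw [dif_pos h, h1, hB]
    · rw [dif_neg h, h1, hfb0 _ _ (by omega)]
  -- Step 7 : the companion-shift endomorphism σ
  set i0 : Fin k := ⟨0, by omega⟩ with hi0
  set i1 : Fin k := ⟨1, hk1⟩ with hi1
  set tgt : Fin k × Fin a → V := fun p =>
    if h : (p.1:ℕ)+1 < k then B (⟨(p.1:ℕ)+1, h⟩, p.2) else B (i0, p.2) + B (i1, p.2) with htgt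
  set σ : V →ₗ[K] V := B.constr K tgt with hσdef
  have hσB : ∀ p, σ (B p) = tgt p := fun p => B.constr_basis K tgt p
  -- σ commutes with f
  have hcomm : σ ∘ₗ f = f ∘ₗ σ := by
    apply B.ext
    rintro ⟨i, j⟩
    simp only [LinearMap.comp_apply]
    rw [hσB ⟨i,j⟩, hfB i j]
    by_cases hj : (j:ℕ)+1 < a
    · rw [dif_pos hj, hσB]
      simp only [htgt]
      by_cases hi : (i:ℕ)+1 < k
      · rw [dif_pos hi, dif_pos hi, hfB, dif_pos hj]
      · rw [dif_neg hi, dif_neg hi, map_add, hfB, hfB, dif_pos hj, dif_pos hj]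
    · rw [dif_neg hj, map_zero]
      simp only [htgt]
      by_cases hi : (i:ℕ)+1 < k
      · rw [dif_pos hi, hfB, dif_neg hj]
      · rw [dif_neg hi, map_add, hfB, hfB, dif_neg hj, dif_neg hj, add_zero]
  have hv0 : (i0 : ℕ) = 0 := rfl
  have hv1 : (i1 : ℕ) = 1 := rfl
  have hBmk : ∀ (m m' : ℕ) (hm : m < k) (hm' : m' < k) (j : Fin a), m = m' →
      B (⟨m, hm⟩, j) = B (⟨m', hm'⟩, j) := by
    intro m m' hm hm' j h
    subst h
    rfl
  -- Step 8 : powers of σ on the basis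
  have hpow : ∀ (m : ℕ) (i : Fin k) (j : Fin a) (h : (i:ℕ) + m < k),
      (σ ^ m) (B (i, j)) = B (⟨(i:ℕ) + m, h⟩, j) := by
    intro m
    induction m with
    | zero =>
      intro i j h
      rw [pow_zero, Module.End.one_apply]
      exact hBmk _ _ i.2 h j (by omega)
    | succ m ih =>
      intro i j h
      rw [pow_succ', Module.End.mul_apply, ih i j (by omega), hσB]
      simp only [htgt]
      rw [dif_pos (show ((⟨(i:ℕ)+m, by omega⟩ : Fin k) : ℕ) + 1 < k by
        (try simp only [Fin.val_mk, hv0, hv1]); omega)]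
      exact hBmk _ _ (by (try simp only [Fin.val_mk, hv0, hv1]); omega) h j (by (try simp only [Fin.val_mk, hv0, hv1]); omega)
  -- Step 9 : the relation σ ^ k = σ + 1
  have hrel : σ ^ k = σ + 1 := by
    apply B.ext
    rintro ⟨i, j⟩
    have hik : (i:ℕ) < k := i.2
    have hsplit : σ ^ k = σ ^ (i:ℕ) * (σ * σ ^ (k-1-(i:ℕ))) := by
      rw [← pow_succ', ← pow_add]; congr 1; omega
    have h1 : (σ * σ ^ (k-1-(i:ℕ))) (B (i,j)) = B (i0, j) + B (i1, j) := by
      rw [Module.End.mul_apply, hpow _ i j (by omega), hσB]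
      simp only [htgt]
      rw [dif_neg (show ¬ (((⟨(i:ℕ) + (k-1-(i:ℕ)), by omega⟩ : Fin k) : ℕ) + 1 < k) by
        (try simp only [Fin.val_mk, hv0, hv1]); omega)]
    rw [hsplit, Module.End.mul_apply, h1, map_add]
    have h0 : (σ ^ (i:ℕ)) (B (i0, j)) = B (i, j) := by
      rw [hpow _ i0 j (by (try simp only [Fin.val_mk, hv0, hv1]); omega)]
      exact hBmk _ _ (by (try simp only [Fin.val_mk, hv0, hv1]); omega) i.2 j (by (try simp only [Fin.val_mk, hv0, hv1]); omega)
    rw [h0, LinearMap.add_apply, Module.End.one_apply]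
    by_cases hi : (i:ℕ)+1 < k
    · have h2 : (σ ^ (i:ℕ)) (B (i1, j)) = B (⟨(i:ℕ)+1, hi⟩, j) := by
        rw [hpow _ i1 j (by (try simp only [Fin.val_mk, hv0, hv1]); omega)]
        exact hBmk _ _ (by (try simp only [Fin.val_mk, hv0, hv1]); omega) hi j (by (try simp only [Fin.val_mk, hv0, hv1]); omega)
      rw [h2, hσB]
      simp only [htgt]
      rw [dif_pos hi]
      exact add_comm _ _
    · -- here i = k - 1
      have hd : (i:ℕ) = (k-2) + 1 := by omega
      have h2 : (σ ^ (i:ℕ)) (B (i1, j)) = B (i0, j) + B (i1, j) := by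
        rw [hd, pow_succ', Module.End.mul_apply,
          hpow _ i1 j (by (try simp only [Fin.val_mk, hv0, hv1]); omega), hσB]
        simp only [htgt]
        rw [dif_neg (show ¬ (((⟨(i1:ℕ) + (k-2), by (try simp only [Fin.val_mk, hv0, hv1]); omega⟩ : Fin k) : ℕ) + 1 < k) by
          (try simp only [Fin.val_mk, hv0, hv1]); omega)]
      rw [h2, hσB]
      simp only [htgt]
      rw [dif_neg hi]
      abel
  -- Step 10 : explicit inverses
  set t : V →ₗ[K] V := σ ^ (k-1) - 1 with htdef
  have hmul1 : σ * t = 1 := by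
    have h1 : σ * σ ^ (k-1) = σ ^ k := by rw [← pow_succ']; congr 1; omega
    rw [htdef, mul_sub, mul_one, h1, hrel]
    abel
  have hmul2 : t * σ = 1 := by
    have h1 : σ ^ (k-1) * σ = σ ^ k := by rw [← pow_succ]; congr 1; omega
    rw [htdef, sub_mul, one_mul, h1, hrel]
    abel
  set G : V →ₗ[K] V := ∑ n ∈ Finset.range k, σ ^ n with hGdef
  have hgeom1 : (σ - 1) * G = σ := by
    rw [hGdef, mul_geom_sum, hrel]
    abel
  have hgeom2 : G * (σ - 1) = σ := by
    rw [hGdef, geom_sum_mul, hrel]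
    abel
  have hct : Commute σ t := by
    rw [htdef]
    exact (Commute.pow_right (Commute.refl σ) _).sub_right (Commute.one_right σ)
  set γ0 : V →ₗ[K] V := 1 - σ with hγ0def
  set γi : V →ₗ[K] V := -(G * t) with hγidef
  have hγ1 : γ0 * γi = 1 := by
    rw [hγ0def, hγidef, mul_neg, ← neg_mul, neg_sub, ← mul_assoc, hgeom1, hmul1]
  have hγ2 : γi * γ0 = 1 := by
    have hswap : t * (σ - 1) = (σ - 1) * t := by
      exact (hct.symm.sub_right (Commute.one_right t)).eq
    rw [hγidef, hγ0def, neg_mul, ← mul_neg, neg_sub, mul_assoc, hswap, ← mul_assoc, hgeom2, hmul1]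
  -- Step 11 : assemble the automorphisms
  have mk1 : σ ∘ₗ t = LinearMap.id := by rw [← Module.End.mul_eq_comp, hmul1, Module.End.one_eq_id]
  have mk2 : t ∘ₗ σ = LinearMap.id := by rw [← Module.End.mul_eq_comp, hmul2, Module.End.one_eq_id]
  have mk3 : γ0 ∘ₗ γi = LinearMap.id := by rw [← Module.End.mul_eq_comp, hγ1, Module.End.one_eq_id]
  have mk4 : γi ∘ₗ γ0 = LinearMap.id := by rw [← Module.End.mul_eq_comp, hγ2, Module.End.one_eq_id]
  refine ⟨LinearEquiv.ofLinear σ t mk1 mk2, LinearEquiv.ofLinear γ0 γi mk3 mk4, ?_, ?_, ?_⟩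
  · rw [LinearEquiv.ofLinear_toLinearMap]
    exact hcomm
  · rw [LinearEquiv.ofLinear_toLinearMap]
    have hp : ∀ x, σ (f x) = f (σ x) := fun x => congrFun (congrArg (fun g => g.toFun) hcomm) x
    ext x
    simp only [LinearMap.comp_apply, hγ0def, LinearMap.sub_apply, Module.End.one_apply, map_sub]
    rw [hp]
  · rw [LinearEquiv.ofLinear_toLinearMap, LinearEquiv.ofLinear_toLinearMap]
    ext x
    simp [hγ0def]
end
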